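/- arXiv:1305.7449 — 4 statements merged into one kernel-verified Lean document; each statement's English description precedes it below -/
import Mathlib

section
/- Let q be an odd integer and λ a self-conjugate partition of n. Then the set M_q(λ) of partitions obtained from λ by removing a single q-hook contains a self-conjugate partition if and only if q is one of the diagonal hook lengths of λ; in that case it contains a unique self-conjugate partition μ, and the multiset of diagonal hook lengths of μ is that of λ with one occurrence of q removed. -/
open scoped BigOperators

/-- `lam : ℕ → ℕ` represents a partition: weakly decreasing and eventually zero
(`lam i` is the `i`-th part, indexed from `0`). -/
def IsPartitionFun (lam : ℕ → ℕ) : Prop :=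
  (∀ i j, i ≤ j → lam j ≤ lam i) ∧ ∃ N, ∀ i, N ≤ i → lam i = 0

/-- The conjugate (transpose) partition. -/
noncomputable def conjFun (lam : ℕ → ℕ) : ℕ → ℕ := fun j => {i | j < lam i}.ncard

/-- The hook length of the `(i,j)`-node of `lam` (nodes `(i,j)` with `j < lam i`,
both coordinates indexed from `0`). -/
noncomputable def hookLength (lam : ℕ → ℕ) (i j : ℕ) : ℕ :=
  (lam i - j) + (conjFun lam j - i) - 1

/-- The leg length of the `(i,j)`-hook of `lam`. -/
noncomputable def legLength (lam : ℕ → ℕ) (i j : ℕ) : ℕ := conjFun lam j - i - 1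

/-- The partition obtained from `lam` by removing the hook of the `(i,j)`-node. -/
noncomputable def removeHook (lam : ℕ → ℕ) (i j : ℕ) : ℕ → ℕ := fun k =>
  if k < i then lam k
  else if k + 1 < conjFun lam j then lam (k + 1) - 1
  else if k + 1 = conjFun lam j then j
  else lam k

/-- `M_q(lam)`: the set of partitions obtained from `lam` by removing a single `q`-hook. -/
noncomputable def MhookSet (q : ℕ) (lam : ℕ → ℕ) : Set (ℕ → ℕ) :=
  {mu | ∃ i j, j < lam i ∧ hookLength lam i j = q ∧ mu = removeHook lam i j}

/-- The number of diagonal nodes (the Durfee square size) of `lam`. -/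
noncomputable def durfee (lam : ℕ → ℕ) : ℕ := {i | i < lam i}.ncard

/-- The (finite set of distinct) diagonal hook lengths of `lam`. -/
noncomputable def diagHooks (lam : ℕ → ℕ) : Finset ℕ :=
  (Finset.range (durfee lam)).image (fun i => hookLength lam i i)

/- ### Auxiliary theory: beta-sets (Maya diagrams) -/

/-- The beta-set (first-column hook "charges") of a partition function. -/
def betaSet (lam : ℕ → ℕ) : Set ℤ := {x | ∃ k : ℕ, (lam k : ℤ) - k = x}

lemma ncard_Iio (m : ℕ) : (Set.Iio m).ncard = m := by
  rw [show Set.Iio m = ↑(Finset.range m) by ext i; simp, Set.ncard_coe_finset,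
    Finset.card_range]

lemma conj_lt_iff {lam : ℕ → ℕ} (hlam : IsPartitionFun lam) (i j : ℕ) :
    i < conjFun lam j ↔ j < lam i := by
  obtain ⟨hmono, N, hN⟩ := hlam
  have hex : ∃ k, lam k ≤ j := ⟨N, by rw [hN N le_rfl]; exact Nat.zero_le j⟩
  have hval : conjFun lam j = Nat.find hex := by
    have hset : {i | j < lam i} = Set.Iio (Nat.find hex) := by
      ext k
      simp only [Set.mem_setOf_eq, Set.mem_Iio]
      constructor
      · intro h
        by_contra hk
        push_neg at hk
        have := le_trans (hmono _ _ hk) (Nat.find_spec hex)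
        omega
      · intro h
        have := Nat.find_min hex h
        omega
    show {i | j < lam i}.ncard = _
    rw [hset, ncard_Iio]
  rw [hval]
  constructor
  · intro h
    have := Nat.find_min hex h
    omega
  · intro h
    by_contra hk
    push_neg at hk
    have := le_trans (hmono _ _ hk) (Nat.find_spec hex)
    omega

lemma conj_partition {lam : ℕ → ℕ} (hlam : IsPartitionFun lam) :
    IsPartitionFun (conjFun lam) := by
  obtain ⟨hmono, N, hN⟩ := hlam
  constructor
  · intro a b hab
    by_contra h
    push_neg at h
    have h1 : conjFun lam a < conjFun lam b := h
    have h2 := (conj_lt_iff ⟨hmono, N, hN⟩ (conjFun lam a) b).mp h1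
    have h3 : ¬ conjFun lam a < conjFun lam a := lt_irrefl _
    have h4 : ¬ a < lam (conjFun lam a) := fun hc =>
      h3 ((conj_lt_iff ⟨hmono, N, hN⟩ (conjFun lam a) a).mpr hc)
    omega
  · refine ⟨lam 0, fun j hj => ?_⟩
    by_contra h
    have h0 : 0 < conjFun lam j := Nat.pos_of_ne_zero h
    have := (conj_lt_iff ⟨hmono, N, hN⟩ 0 j).mp h0
    omega

lemma mem_beta_conj {lam : ℕ → ℕ} (hlam : IsPartitionFun lam) (x : ℤ) :
    x ∈ betaSet (conjFun lam) ↔ (1 - x) ∉ betaSet lam := by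
  constructor
  · rintro ⟨j, hj⟩ ⟨k, hk⟩
    rcases Nat.lt_or_ge j (lam k) with h | h
    · have := (conj_lt_iff hlam k j).mpr h
      omega
    · have : ¬ k < conjFun lam j := fun hc => by
        have := (conj_lt_iff hlam k j).mp hc; omega
      omega
  · intro h
    have hzero : ∀ j : ℕ, lam 0 ≤ j → conjFun lam j = 0 := by
      intro j hj
      by_contra hc
      have h0 : 0 < conjFun lam j := Nat.pos_of_ne_zero hc
      have := (conj_lt_iff hlam 0 j).mp h0
      omega
    have hex : ∃ j : ℕ, (conjFun lam j : ℤ) - j ≤ x := by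
      refine ⟨lam 0 + (-x).toNat, ?_⟩
      rw [hzero _ (by omega)]
      omega
    obtain ⟨j0, hspec, hmin⟩ : ∃ j0 : ℕ, ((conjFun lam j0 : ℤ) - j0 ≤ x) ∧
        ∀ j < j0, ¬ ((conjFun lam j : ℤ) - j ≤ x) :=
      ⟨Nat.find hex, Nat.find_spec hex, fun j hj => Nat.find_min hex hj⟩
    have heq : (conjFun lam j0 : ℤ) - j0 = x := by
      by_contra hne
      have hlt : (conjFun lam j0 : ℤ) - j0 ≤ x - 1 := by omega
      rcases Nat.eq_zero_or_pos j0 with h0 | hpos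
      · rw [h0] at hlt
        push_cast at hlt
        -- conjFun lam 0 ≤ x - 1, so x ≥ 1
        set k := (x - 1).toNat with hkdef
        have hk1 : (k : ℤ) = x - 1 := by omega
        have hklam : lam k = 0 := by
          by_contra hc
          have : k < conjFun lam 0 := (conj_lt_iff hlam k 0).mpr (Nat.pos_of_ne_zero hc)
          omega
        exact h ⟨k, by rw [hklam]; omega⟩
      · obtain ⟨j', rfl⟩ : ∃ j', j0 = j' + 1 := ⟨j0 - 1, by omega⟩
        have hmin' : x < (conjFun lam j' : ℤ) - j' := by
          have := hmin j' (by omega)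
          omega
        set i := (x + j').toNat with hidef
        have hge : (0:ℤ) ≤ x + j' := by
          have : (0:ℤ) ≤ (conjFun lam (j' + 1) : ℤ) := by positivity
          omega
        have hi : (i : ℤ) = x + j' := by omega
        have hi1 : i < conjFun lam j' := by omega
        have hi2 : ¬ i < conjFun lam (j' + 1) := by omega
        have hlam1 : j' < lam i := (conj_lt_iff hlam i j').mp hi1
        have hlam2 : ¬ j' + 1 < lam i := fun hc =>
          hi2 ((conj_lt_iff hlam i (j' + 1)).mpr hc)
        have : lam i = j' + 1 := by omega
        exact h ⟨i, by rw [this]; omega⟩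
    exact ⟨j0, heq⟩

lemma beta_strictAnti {lam : ℕ → ℕ} (hmono : ∀ i j, i ≤ j → lam j ≤ lam i)
    {k l : ℕ} (h : k < l) : (lam l : ℤ) - l < (lam k : ℤ) - k := by
  have := hmono k l h.le
  omega

lemma eq_of_beta_eq {mu nu : ℕ → ℕ} (hmu : IsPartitionFun mu) (hnu : IsPartitionFun nu)
    (h : betaSet mu = betaSet nu) : mu = nu := by
  funext k
  induction k using Nat.strong_induction_on with
  | _ k IH =>
    have h1 : ¬ ((mu k : ℤ) - k < (nu k : ℤ) - k) := by
      intro hlt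
      have : (nu k : ℤ) - k ∈ betaSet mu := h ▸ ⟨k, rfl⟩
      obtain ⟨l, hl⟩ := this
      rcases lt_trichotomy l k with hc | hc | hc
      · rw [IH l hc] at hl
        have := beta_strictAnti hnu.1 hc
        omega
      · subst hc
        omega
      · have := beta_strictAnti hmu.1 hc
        omega
    have h2 : ¬ ((nu k : ℤ) - k < (mu k : ℤ) - k) := by
      intro hlt
      have : (mu k : ℤ) - k ∈ betaSet nu := h ▸ ⟨k, rfl⟩
      obtain ⟨l, hl⟩ := this
      rcases lt_trichotomy l k with hc | hc | hc
      · rw [← IH l hc] at hl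
        have := beta_strictAnti hmu.1 hc
        omega
      · subst hc
        omega
      · have := beta_strictAnti hnu.1 hc
        omega
    omega

lemma removeHook_partition {lam : ℕ → ℕ} {i j : ℕ} (hlam : IsPartitionFun lam)
    (hj : j < lam i) : IsPartitionFun (removeHook lam i j) := by
  obtain ⟨hmono, N, hN⟩ := hlam
  have hlam' : IsPartitionFun lam := ⟨hmono, N, hN⟩
  have hic : i < conjFun lam j := (conj_lt_iff hlam' i j).mpr hj
  set c := conjFun lam j with hc
  have hstep : ∀ k, removeHook lam i j (k + 1) ≤ removeHook lam i j k := by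
    intro k
    have hA : lam (k + 1) ≤ lam k := hmono _ _ (by omega)
    have hB : lam (k + 1 + 1) ≤ lam (k + 1) := hmono _ _ (by omega)
    have hC : k + 1 < c → j < lam (k + 1) := fun h => (conj_lt_iff hlam' (k+1) j).mp h
    have hC2 : k + 1 + 1 < c → j < lam (k + 1 + 1) :=
      fun h => (conj_lt_iff hlam' (k+1+1) j).mp h
    have hD : c ≤ k + 1 → lam (k + 1) ≤ j := by
      intro h
      by_contra hcc
      have := (conj_lt_iff hlam' (k+1) j).mpr (by omega)
      omega
    have hE : c ≤ k → lam k ≤ j := by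
      intro h
      by_contra hcc
      have := (conj_lt_iff hlam' k j).mpr (by omega)
      omega
    simp only [removeHook, ← hc]
    split_ifs <;> omega
  have hanti : ∀ a b, a ≤ b → removeHook lam i j b ≤ removeHook lam i j a := by
    intro a b hab
    exact antitone_nat_of_succ_le hstep hab
  refine ⟨hanti, max N c, fun k hk => ?_⟩
  have h1 : removeHook lam i j k = lam k := by
    simp only [removeHook, ← hc]
    split_ifs <;> omega
  rw [h1]
  exact hN k (by omega)

lemma beta_removeHook {lam : ℕ → ℕ} {i j : ℕ} (hlam : IsPartitionFun lam)
    (hj : j < lam i) :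
    betaSet (removeHook lam i j) =
      (betaSet lam \ {(lam i : ℤ) - i}) ∪ {(j : ℤ) - (conjFun lam j) + 1} := by
  obtain ⟨hmono, N, hN⟩ := hlam
  have hlam' : IsPartitionFun lam := ⟨hmono, N, hN⟩
  have hic : i < conjFun lam j := (conj_lt_iff hlam' i j).mpr hj
  set c := conjFun lam j with hc
  ext x
  simp only [Set.mem_union, Set.mem_diff, Set.mem_singleton_iff]
  constructor
  · rintro ⟨k, hk⟩
    simp only [removeHook, ← hc] at hk
    split_ifs at hk with h1 h2 h3
    · left
      refine ⟨⟨k, hk⟩, ?_⟩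
      have := beta_strictAnti hmono h1
      omega
    · have hjk : j < lam (k + 1) := (conj_lt_iff hlam' (k+1) j).mp h2
      left
      refine ⟨⟨k + 1, by push_cast; omega⟩, ?_⟩
      have := beta_strictAnti hmono (show i < k + 1 by omega)
      omega
    · right
      omega
    · left
      refine ⟨⟨k, hk⟩, ?_⟩
      have := beta_strictAnti hmono (show i < k by omega)
      omega
  · rintro (⟨⟨k, hk⟩, hne⟩ | hx)
    · have hki : k ≠ i := fun h => hne (by rw [← h]; exact hk.symm ▸ rfl)
      rcases lt_trichotomy k i with hlt | heq | hgt
      · exact ⟨k, by simp only [removeHook, ← hc, if_pos hlt]; exact hk⟩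
      · exact absurd heq hki
      · by_cases hkc : k < c
        · refine ⟨k - 1, ?_⟩
          have hk1 : k - 1 + 1 = k := by omega
          have hjk : j < lam k := (conj_lt_iff hlam' k j).mp hkc
          simp only [removeHook, hk1, ← hc, if_neg (show ¬ k - 1 < i by omega),
            if_pos hkc]
          omega
        · refine ⟨k, ?_⟩
          simp only [removeHook, ← hc, if_neg (show ¬ k < i by omega),
            if_neg (show ¬ k + 1 < c by omega), if_neg (show ¬ k + 1 = c by omega)]
          exact hk
    · refine ⟨c - 1, ?_⟩
      have hk1 : c - 1 + 1 = c := by omega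
      simp only [removeHook, hk1, ← hc]
      split_ifs <;> omega

lemma sym_update {S : Set ℤ} (hS : ∀ y, y ∈ S ↔ 1 - y ∉ S) {x q : ℤ}
    (hx : x ∈ S) (hq : 1 ≤ q) :
    (∀ y, y ∈ (S \ {x}) ∪ {x - q} ↔ 1 - y ∉ (S \ {x}) ∪ {x - q}) ↔ q = 2 * x - 1 := by
  have hx' : 1 - x ∉ S := (hS x).mp hx
  constructor
  · intro h
    have h1 : x ∉ (S \ {x}) ∪ {x - q} := by
      simp only [Set.mem_union, Set.mem_diff, Set.mem_singleton_iff]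
      rintro (⟨_, hne⟩ | hne)
      · simp at hne
      · omega
    have h2 : 1 - x ∈ (S \ {x}) ∪ {x - q} := by
      by_contra hcc
      exact h1 ((h x).mpr hcc)
    simp only [Set.mem_union, Set.mem_diff, Set.mem_singleton_iff] at h2
    rcases h2 with ⟨h2, _⟩ | h2
    · exact absurd h2 hx'
    · omega
  · intro hqe y
    have hxq : x - q = 1 - x := by omega
    rw [hxq]
    simp only [Set.mem_union, Set.mem_diff, Set.mem_singleton_iff]
    have hSy := hS y
    by_cases hyx : y = x
    · subst hyx
      constructor
      · rintro (⟨_, hne⟩ | hne)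
        · simp at hne
        · exact absurd hne (by omega)
      · intro hcon
        exact absurd (Or.inr rfl) hcon
    · by_cases hy1x : y = 1 - x
      · subst hy1x
        rw [show (1 : ℤ) - (1 - x) = x by ring]
        constructor
        · rintro _ (⟨_, hne⟩ | hne)
          · simp at hne
          · omega
        · intro _
          exact Or.inr rfl
      · constructor
        · rintro (⟨hyS, _⟩ | hne)
          · have h1y : 1 - y ∉ S := hSy.mp hyS
            rintro (⟨hm, _⟩ | hm)
            · exact h1y hm
            · exact hy1x (by omega)
          · exact absurd hne hy1x
        · intro hcon
          refine Or.inl ⟨hSy.mpr ?_, hyx⟩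
          intro hmem
          exact hcon (Or.inl ⟨hmem, fun h => hy1x (by omega)⟩)

lemma selfconj_iff_sym {nu : ℕ → ℕ} (hnu : IsPartitionFun nu) :
    conjFun nu = nu ↔ ∀ x : ℤ, x ∈ betaSet nu ↔ 1 - x ∉ betaSet nu := by
  constructor
  · intro h x
    conv_lhs => rw [← h]
    exact mem_beta_conj hnu x
  · intro h
    refine eq_of_beta_eq (conj_partition hnu) hnu ?_
    ext x
    rw [mem_beta_conj hnu x, ← h x]

lemma lt_durfee_iff {lam : ℕ → ℕ} (hlam : IsPartitionFun lam) (i : ℕ) :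
    i < durfee lam ↔ i < lam i := by
  obtain ⟨hmono, N, hN⟩ := hlam
  have hex : ∃ k, lam k ≤ k := ⟨N, by rw [hN N le_rfl]; exact Nat.zero_le N⟩
  have hval : durfee lam = Nat.find hex := by
    have hset : {i | i < lam i} = Set.Iio (Nat.find hex) := by
      ext k
      simp only [Set.mem_setOf_eq, Set.mem_Iio]
      constructor
      · intro h
        by_contra hk
        push_neg at hk
        have h1 := le_trans (hmono _ _ hk) (Nat.find_spec hex)
        omega
      · intro h
        have := Nat.find_min hex h
        omega
    show {i | i < lam i}.ncard = _
    rw [hset, ncard_Iio]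
  rw [hval]
  constructor
  · intro h
    have := Nat.find_min hex h
    omega
  · intro h
    by_contra hk
    push_neg at hk
    have h1 := le_trans (hmono _ _ hk) (Nat.find_spec hex)
    omega

lemma mem_diagHooks_iff {nu : ℕ → ℕ} (hnu : IsPartitionFun nu) (hsc : conjFun nu = nu)
    (r : ℕ) :
    r ∈ diagHooks nu ↔ ∃ y : ℤ, y ∈ betaSet nu ∧ 1 ≤ y ∧ (r : ℤ) = 2 * y - 1 := by
  simp only [diagHooks, Finset.mem_image, Finset.mem_range]
  constructor
  · rintro ⟨i, hi, hr⟩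
    have hii : i < nu i := (lt_durfee_iff hnu i).mp hi
    have hhl : hookLength nu i i = (nu i - i) + (nu i - i) - 1 := by
      simp [hookLength, hsc]
    refine ⟨(nu i : ℤ) - i, ⟨i, rfl⟩, by omega, ?_⟩
    rw [← hr, hhl]
    omega
  · rintro ⟨y, ⟨k, hk⟩, hy1, hyr⟩
    have hkk : k < nu k := by omega
    refine ⟨k, (lt_durfee_iff hnu k).mpr hkk, ?_⟩
    have hhl : hookLength nu k k = (nu k - k) + (nu k - k) - 1 := by
      simp [hookLength, hsc]
    omega

/-- Let `q` be odd and `lam` a self-conjugate partition.  Then `M_q(lam)`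
contains a self-conjugate partition iff `q` is one of the diagonal hook lengths of `lam`;
in that case the self-conjugate member `mu` of `M_q(lam)` is unique, and its diagonal hook
lengths are those of `lam` with the occurrence of `q` removed. -/
theorem stmt_6 (q : ℕ) (hq : Odd q) (lam : ℕ → ℕ) (hlam : IsPartitionFun lam)
    (hsc : conjFun lam = lam) :
    ((∃ mu ∈ MhookSet q lam, conjFun mu = mu) ↔ q ∈ diagHooks lam) ∧
    (∀ mu1 ∈ MhookSet q lam, ∀ mu2 ∈ MhookSet q lam,
      conjFun mu1 = mu1 → conjFun mu2 = mu2 → mu1 = mu2) ∧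
    (∀ mu ∈ MhookSet q lam, conjFun mu = mu → diagHooks mu = (diagHooks lam).erase q) := by
  have hq1 : 1 ≤ q := hq.pos
  have hq1' : (1 : ℤ) ≤ q := by exact_mod_cast hq1
  have hsym : ∀ x : ℤ, x ∈ betaSet lam ↔ 1 - x ∉ betaSet lam :=
    (selfconj_iff_sym hlam).mp hsc
  have key : ∀ mu ∈ MhookSet q lam, conjFun mu = mu →
      ∃ x : ℤ, x ∈ betaSet lam ∧ (q : ℤ) = 2 * x - 1 ∧
        betaSet mu = (betaSet lam \ {x}) ∪ {x - q} ∧ IsPartitionFun mu := by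
    rintro mu ⟨i, j, hj, hhook, rfl⟩ hmu
    have hic : i < conjFun lam j := (conj_lt_iff hlam i j).mpr hj
    have hpart := removeHook_partition hlam hj
    have hbeta := beta_removeHook hlam hj
    have hhl : (lam i - j) + (conjFun lam j - i) - 1 = q := hhook
    have hqx : (j : ℤ) - (conjFun lam j) + 1 = ((lam i : ℤ) - i) - q := by omega
    rw [hqx] at hbeta
    have hsymmu := (selfconj_iff_sym hpart).mp hmu
    simp only [hbeta] at hsymmu
    have hx : (lam i : ℤ) - i ∈ betaSet lam := ⟨i, rfl⟩
    have hqeq := (sym_update hsym hx hq1').mp hsymmu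
    exact ⟨(lam i : ℤ) - i, hx, hqeq, hbeta, hpart⟩
  refine ⟨⟨?_, ?_⟩, ?_, ?_⟩
  · rintro ⟨mu, hmu, hcm⟩
    obtain ⟨x, hxS, hqx, _, _⟩ := key mu hmu hcm
    rw [mem_diagHooks_iff hlam hsc]
    exact ⟨x, hxS, by omega, hqx⟩
  · intro hqd
    rw [mem_diagHooks_iff hlam hsc] at hqd
    obtain ⟨y, ⟨k, hk⟩, hy1, hyq⟩ := hqd
    have hkk : k < lam k := by omega
    have hpart := removeHook_partition hlam hkk
    have hbeta := beta_removeHook hlam hkk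
    have hck : conjFun lam k = lam k := congrFun hsc k
    have hqx : (k : ℤ) - (conjFun lam k) + 1 = y - q := by rw [hck]; omega
    rw [hk, hqx] at hbeta
    have hhook : hookLength lam k k = q := by
      show (lam k - k) + (conjFun lam k - k) - 1 = q
      rw [hck]
      omega
    refine ⟨removeHook lam k k, ⟨k, k, hkk, hhook, rfl⟩, ?_⟩
    refine (selfconj_iff_sym hpart).mpr ?_
    intro x
    rw [hbeta]
    have hyS : y ∈ betaSet lam := ⟨k, hk⟩
    exact (sym_update hsym hyS hq1').mpr (by omega) x
  · intro mu1 h1 mu2 h2 hc1 hc2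
    obtain ⟨x1, _, hq1x, hb1, hp1⟩ := key mu1 h1 hc1
    obtain ⟨x2, _, hq2x, hb2, hp2⟩ := key mu2 h2 hc2
    have hx12 : x1 = x2 := by omega
    refine eq_of_beta_eq hp1 hp2 ?_
    rw [hb1, hb2, hx12]
  · intro mu hm hcm
    obtain ⟨x, hxS, hqx, hbeta, hpart⟩ := key mu hm hcm
    have hx1 : (1 : ℤ) ≤ x := by omega
    ext r
    rw [mem_diagHooks_iff hpart hcm, Finset.mem_erase, mem_diagHooks_iff hlam hsc,
      hbeta]
    constructor
    · rintro ⟨y, hy, hy1, hyr⟩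
      simp only [Set.mem_union, Set.mem_diff, Set.mem_singleton_iff] at hy
      rcases hy with ⟨hyS, hyx⟩ | hyq
      · refine ⟨fun hrq => hyx ?_, y, hyS, hy1, hyr⟩
        subst hrq
        omega
      · omega
    · rintro ⟨hrq, y, hyS, hy1, hyr⟩
      have hyx : y ≠ x := by
        intro h
        subst h
        exact hrq (by omega)
      exact ⟨y, Or.inl ⟨hyS, hyx⟩, hy1, hyr⟩
end

section
/- For any odd integer q and any partition λ, the q-sign satisfies δ_q(λ) = δ_q(λ*), where λ* is the conjugate partition. Here δ_q(λ) = (−1)^{L(c_1)+⋯+L(c_k)} for any sequence of q-hooks c_1,…,c_k removed from λ to reach its q-core, and this is well-defined (independent of the sequence). -/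
open scoped BigOperators

/-- `IsHookRemovalSeq q lam ls mu`: `mu` is obtained from `lam` by successively removing
`q`-hooks whose leg lengths are recorded in the list `ls`. -/
def IsHookRemovalSeq (q : ℕ) : (ℕ → ℕ) → List ℕ → (ℕ → ℕ) → Prop
  | lam, [], mu => mu = lam
  | lam, l :: ls, mu => ∃ i j, j < lam i ∧ hookLength lam i j = q ∧ legLength lam i j = l ∧
      IsHookRemovalSeq q (removeHook lam i j) ls mu

/-- `mu` is a `q`-core: it has no hook of length `q`. -/
noncomputable def IsQCore (q : ℕ) (mu : ℕ → ℕ) : Prop :=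
  ∀ i j, j < mu i → hookLength mu i j ≠ q



namespace Stmt7Aux

lemma ncard_setIio (m : ℕ) : (Set.Iio m).ncard = m := by
  rw [← Finset.coe_Iio, Set.ncard_coe_finset, Nat.card_Iio]

lemma downclosed_eq_Iio {S : Set ℕ} (hfin : S.Finite)
    (hdc : ∀ a b, a ≤ b → b ∈ S → a ∈ S) : S = Set.Iio S.ncard := by
  rcases S.eq_empty_or_nonempty with h | h
  · simp [h, Set.Iio, Set.eq_empty_iff_forall_notMem]
  · have hmem : ∀ a, a ∈ S ↔ a ≤ hfin.toFinset.max' (by simpa using h) := by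
      intro a
      constructor
      · intro ha; exact Finset.le_max' _ a (by simpa using ha)
      · intro ha; exact hdc a _ ha (by simpa using hfin.toFinset.max'_mem _)
    have : S = Set.Iio (hfin.toFinset.max' (by simpa using h) + 1) := by
      ext a; simp [hmem a, Set.mem_Iio, Nat.lt_succ_iff]
    rw [this, ncard_setIio]

lemma conjFun_eq {lam : ℕ → ℕ} (hmono : ∀ i j, i ≤ j → lam j ≤ lam i) (k m : ℕ)
    (h1 : lam m ≤ k) (h2 : ∀ r, r < m → k < lam r) : conjFun lam k = m := by
  have : {i | k < lam i} = Set.Iio m := by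
    ext r
    simp only [Set.mem_setOf_eq, Set.mem_Iio]
    constructor
    · intro hr
      by_contra hc
      exact absurd (lt_of_lt_of_le hr (le_trans (hmono m r (not_lt.1 hc)) h1)) (lt_irrefl k)
    · exact h2 r
  rw [conjFun, this, ncard_setIio]

lemma lt_conjFun_iff {lam : ℕ → ℕ} (hlam : IsPartitionFun lam) (i k : ℕ) :
    i < conjFun lam k ↔ k < lam i := by
  obtain ⟨hmono, N, hN⟩ := hlam
  have hfin : {i | k < lam i}.Finite := by
    apply (Set.finite_Iio N).subset
    intro r hr
    simp only [Set.mem_setOf_eq] at hr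
    by_contra hc
    rw [hN r (not_lt.1 hc)] at hr; omega
  have hdc : ∀ a b : ℕ, a ≤ b → b ∈ {i | k < lam i} → a ∈ {i | k < lam i} := by
    intro a b hab hb
    exact lt_of_lt_of_le hb (hmono a b hab)
  have h := downclosed_eq_Iio hfin hdc
  constructor
  · intro h1
    have : i ∈ Set.Iio ({i | k < lam i}.ncard) := h1
    rw [← h] at this; exact this
  · intro h1
    have : i ∈ {i | k < lam i} := h1
    rw [h] at this; exact this

lemma conj_isPartition {lam : ℕ → ℕ} (hlam : IsPartitionFun lam) :
    IsPartitionFun (conjFun lam) := by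
  obtain ⟨hmono, N, hN⟩ := hlam
  constructor
  · intro i j hij
    have hsub : {r | j < lam r} ⊆ {r | i < lam r} := fun r hr => lt_of_le_of_lt hij hr
    have hfin : {r | i < lam r}.Finite := by
      apply (Set.finite_Iio N).subset
      intro r hr
      simp only [Set.mem_setOf_eq] at hr
      by_contra hc
      rw [hN r (not_lt.1 hc)] at hr; omega
    exact Set.ncard_le_ncard hsub hfin
  · refine ⟨lam 0, fun k hk => ?_⟩
    exact conjFun_eq hmono k 0 (le_trans (le_refl _) hk) (fun r hr => absurd hr (Nat.not_lt_zero r))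

lemma conj_conj {lam : ℕ → ℕ} (hlam : IsPartitionFun lam) :
    conjFun (conjFun lam) = lam := by
  funext i
  have : {j | i < conjFun lam j} = Set.Iio (lam i) := by
    ext j
    simp only [Set.mem_setOf_eq, Set.mem_Iio]
    exact lt_conjFun_iff hlam i j
  rw [conjFun, this, ncard_setIio]

section RH
variable {lam : ℕ → ℕ} {i j : ℕ}

-- value computations (no hypotheses on lam needed)
lemma removeHook_lt {k : ℕ} (hk : k < i) : removeHook lam i j k = lam k := by
  simp [removeHook, hk]

lemma removeHook_mid {k : ℕ} (hk1 : i ≤ k) (hk2 : k + 1 < conjFun lam j) :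
    removeHook lam i j k = lam (k + 1) - 1 := by
  simp [removeHook, hk2, Nat.not_lt.2 hk1]

lemma removeHook_last {k : ℕ} (hik : i ≤ k) (hk : k + 1 = conjFun lam j) :
    removeHook lam i j k = j := by
  have h2 : ¬ k + 1 < conjFun lam j := by omega
  simp [removeHook, hk, h2, Nat.not_lt.2 hik]

lemma removeHook_ge {k : ℕ} (hk : conjFun lam j ≤ k) (hik : i < conjFun lam j) :
    removeHook lam i j k = lam k := by
  have h1 : ¬ k < i := by omega
  have h2 : ¬ k + 1 < conjFun lam j := by omega
  have h3 : ¬ k + 1 = conjFun lam j := by omega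
  simp [removeHook, h1, h2, h3]

variable (hlam : IsPartitionFun lam) (hij : j < lam i)
include hlam

lemma lt_of_lt_conj {r : ℕ} (hr : r < conjFun lam j) : j < lam r :=
  (lt_conjFun_iff hlam r j).1 hr

lemma le_of_ge_conj {r : ℕ} (hr : conjFun lam j ≤ r) : lam r ≤ j := by
  by_contra hc
  exact absurd ((lt_conjFun_iff hlam r j).2 (not_le.1 hc)) (not_lt.2 hr)

include hij in
lemma i_lt_conj : i < conjFun lam j := (lt_conjFun_iff hlam i j).2 hij

include hij in
lemma removeHook_le (k : ℕ) : removeHook lam i j k ≤ lam k := by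
  have hic := i_lt_conj hlam hij
  rcases lt_or_ge k i with h | h
  · rw [removeHook_lt h]
  rcases lt_or_ge (k+1) (conjFun lam j) with h2 | h2
  · rw [removeHook_mid h h2]
    have := hlam.1 k (k+1) (by omega)
    omega
  rcases eq_or_lt_of_le h2 with h3 | h3
  · rw [removeHook_last h h3.symm]
    have := lt_of_lt_conj hlam (show k < conjFun lam j by omega)
    omega
  · rw [removeHook_ge (by omega) hic]

include hij in
lemma removeHook_isPartition : IsPartitionFun (removeHook lam i j) := by
  have hic := i_lt_conj hlam hij
  have hmono := hlam.1
  constructor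
  · have adj : ∀ k, removeHook lam i j (k+1) ≤ removeHook lam i j k := by
      intro k
      rcases lt_or_ge (k+1) i with h | h
      · rw [removeHook_lt (show k+1 < i from h), removeHook_lt (show k < i by omega)]
        exact hmono k (k+1) (by omega)
      rcases eq_or_lt_of_le h with h1 | h1
      · -- i = k + 1 : row k uses lam, row k+1 = row i
        rw [removeHook_lt (show k < i by omega)]
        rcases lt_or_ge (i+1) (conjFun lam j) with h2 | h2
        · rw [← h1, removeHook_mid (le_refl i) h2]
          have := hmono k (i+1) (by omega)
          omega
        · have h3 : i + 1 = conjFun lam j := by omega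
          rw [← h1, removeHook_last (le_refl i) h3]
          have := hmono k i (by omega)
          omega
      · -- i ≤ k
        have hik : i ≤ k := by omega
        rcases lt_or_ge (k+2) (conjFun lam j) with h2 | h2
        · rw [removeHook_mid hik (by omega), removeHook_mid (show i ≤ k+1 by omega) (show k+1+1 < conjFun lam j by omega)]
          have := hmono (k+1) (k+1+1) (by omega)
          omega
        rcases eq_or_lt_of_le h2 with h3 | h3
        · -- k+2 = c: row k mid, row k+1 last
          have h4 : k + 1 < conjFun lam j := by omega
          rw [removeHook_mid hik h4, removeHook_last (show i ≤ k+1 by omega) (show k+1+1 = conjFun lam j by omega)]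
          have := lt_of_lt_conj hlam (show k + 1 < conjFun lam j from h4)
          omega
        · -- k + 2 > c
          rcases Nat.lt_or_ge k (conjFun lam j) with h4 | h4
          · -- k < c ≤ k+1 : k+1 = c: row k last, row k+1 ge
            have h5 : k + 1 = conjFun lam j := by omega
            rw [removeHook_last hik h5, removeHook_ge (show conjFun lam j ≤ k+1 by omega) hic]
            exact le_of_ge_conj hlam (by omega)
          · rw [removeHook_ge (by omega) hic, removeHook_ge (by omega) hic]
            exact hmono k (k+1) (by omega)
    intro a b hab
    induction b with
    | zero => simp [Nat.le_zero.1 hab]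
    | succ b ih =>
      rcases Nat.lt_or_ge a (b+1) with h | h
      · exact le_trans (adj b) (ih (by omega))
      · have : a = b + 1 := by omega
        simp [this]
  · obtain ⟨N, hN⟩ := hlam.2
    refine ⟨N, fun k hk => ?_⟩
    have := removeHook_le hlam hij k
    have := hN k hk
    omega

end RH

noncomputable def mfun (q : ℕ) (B : Finset ℕ) (y : ℕ) : ℕ :=
  y % q + q * ((B.filter (fun z => z < y ∧ z % q = y % q)).card)

noncomputable def psi (q : ℕ) (B : Finset ℕ) : ℕ :=
  ((B ×ˢ B).filter (fun p => p.1 < p.2 ∧ mfun q B p.2 < mfun q B p.1)).card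

section Move
variable {q x : ℕ} {B : Finset ℕ}

lemma same_mod_le {y x : ℕ} (hq : 0 < q) (h : y % q = x % q) (hyx : y < x) : y + q ≤ x := by
  have e1 := Nat.div_add_mod y q
  have e2 := Nat.div_add_mod x q
  have h3 : y / q < x / q := by
    by_contra hc
    have h4 : q * (x / q) ≤ q * (y / q) := Nat.mul_le_mul_left q (not_lt.1 hc)
    omega
  have h4 : q * (y / q + 1) ≤ q * (x / q) := Nat.mul_le_mul_left q h3
  have h5 : q * (y / q + 1) = q * (y / q) + q := Nat.mul_succ q _
  omega

lemma mfun_mod (hq : 0 < q) (B : Finset ℕ) (y : ℕ) : mfun q B y % q = y % q := by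
  rw [mfun, Nat.add_mul_mod_self_left, Nat.mod_mod]

variable (hq : 0 < q) (hx : x ∈ B) (hxq : q ≤ x) (hnot : x - q ∉ B)

include hq hx hxq hnot

lemma sub_mod_eq : (x - q) % q = x % q := by
  conv_rhs => rw [show x = (x - q) + q by omega]
  rw [Nat.add_mod_right]

-- m is unchanged on B \ {x}
lemma mfun_move (y : ℕ) (hy : y ∈ B) (hyx : y ≠ x) :
    mfun q (insert (x - q) (B.erase x)) y = mfun q B y := by
  have hsub := sub_mod_eq hq hx hxq hnot
  by_cases hmod : y % q = x % q
  · rcases Nat.lt_or_ge y x with hlt | hgt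
    · -- y < x - q
      have hyq : y + q ≤ x := same_mod_le hq hmod hlt
      have hylt : y < x - q := by
        rcases Nat.lt_or_ge y (x - q) with h | h
        · exact h
        · exact absurd (by omega : y = x - q) (fun h2 => hnot (h2 ▸ hy))
      have : (insert (x - q) (B.erase x)).filter (fun z => z < y ∧ z % q = y % q)
          = B.filter (fun z => z < y ∧ z % q = y % q) := by
        ext z
        simp only [Finset.mem_filter, Finset.mem_insert, Finset.mem_erase]
        constructor
        · rintro ⟨hz1 | ⟨hz2, hz3⟩, hz4, hz5⟩
          · omega
          · exact ⟨hz3, hz4, hz5⟩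
        · rintro ⟨hz1, hz2, hz3⟩
          exact ⟨Or.inr ⟨by omega, hz1⟩, hz2, hz3⟩
      rw [mfun, mfun, this]
    · -- x < y
      have hxy : x < y := by omega
      have hstep : (insert (x - q) (B.erase x)).filter (fun z => z < y ∧ z % q = y % q)
          = insert (x - q) ((B.filter (fun z => z < y ∧ z % q = y % q)).erase x) := by
        ext z
        simp only [Finset.mem_filter, Finset.mem_insert, Finset.mem_erase]
        constructor
        · rintro ⟨hz1 | ⟨hz2, hz3⟩, hz4, hz5⟩
          · exact Or.inl hz1
          · exact Or.inr ⟨hz2, hz3, hz4, hz5⟩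
        · rintro (rfl | ⟨hz2, hz3, hz4, hz5⟩)
          · exact ⟨Or.inl rfl, by omega, by omega⟩
          · exact ⟨Or.inr ⟨hz2, hz3⟩, hz4, hz5⟩
      have hxin : x ∈ B.filter (fun z => z < y ∧ z % q = y % q) := by
        simp only [Finset.mem_filter]
        exact ⟨hx, hxy, hmod.symm⟩
      have hnotin : x - q ∉ (B.filter (fun z => z < y ∧ z % q = y % q)).erase x := by
        intro h
        exact hnot (Finset.mem_of_mem_filter _ (Finset.mem_of_mem_erase h))
      have hpos : 0 < (B.filter (fun z => z < y ∧ z % q = y % q)).card :=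
        Finset.card_pos.2 ⟨x, hxin⟩
      rw [mfun, mfun, hstep, Finset.card_insert_of_notMem hnotin,
        Finset.card_erase_of_mem hxin, Nat.sub_add_cancel hpos]
  · -- different runner
    have : (insert (x - q) (B.erase x)).filter (fun z => z < y ∧ z % q = y % q)
        = B.filter (fun z => z < y ∧ z % q = y % q) := by
      ext z
      simp only [Finset.mem_filter, Finset.mem_insert, Finset.mem_erase]
      constructor
      · rintro ⟨hz1 | ⟨hz2, hz3⟩, hz4, hz5⟩
        · exfalso; apply hmod; rw [← hz5, hz1, hsub]
        · exact ⟨hz3, hz4, hz5⟩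
      · rintro ⟨hz1, hz2, hz3⟩
        refine ⟨Or.inr ⟨?_, hz1⟩, hz2, hz3⟩
        rintro rfl
        exact hmod hz3.symm
    rw [mfun, mfun, this]

lemma mfun_move_x :
    mfun q (insert (x - q) (B.erase x)) (x - q) = mfun q B x := by
  have hsub := sub_mod_eq hq hx hxq hnot
  have : (insert (x - q) (B.erase x)).filter (fun z => z < x - q ∧ z % q = (x - q) % q)
      = B.filter (fun z => z < x ∧ z % q = x % q) := by
    ext z
    simp only [Finset.mem_filter, Finset.mem_insert, Finset.mem_erase]
    constructor
    · rintro ⟨hz1 | ⟨hz2, hz3⟩, hz4, hz5⟩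
      · omega
      · exact ⟨hz3, by omega, by omega⟩
    · rintro ⟨hz1, hz2, hz3⟩
      have hzx : z ≠ x := by omega
      have : z + q ≤ x := same_mod_le hq hz3 hz2
      have hzq : z ≠ x - q := fun h => hnot (h ▸ hz1)
      exact ⟨Or.inr ⟨hzx, hz1⟩, by omega, by omega⟩
  rw [mfun, mfun, this, hsub]

end Move

lemma neg_one_pow_congr {a b : ℕ} (h : a % 2 = b % 2) : (-1 : ℤ) ^ a = (-1) ^ b := by
  rw [← Nat.div_add_mod a 2, ← Nat.div_add_mod b 2, pow_add, pow_add, pow_mul, pow_mul, h]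
  norm_num

/-- Count of "touching" inversion pairs as a one-dimensional count. -/
lemma touch_card (C : Finset ℕ) (μ : ℕ → ℕ) (w : ℕ) (hw : w ∈ C) :
    (((C ×ˢ C).filter (fun p => p.1 < p.2 ∧ μ p.2 < μ p.1)).filter
        (fun p => p.1 = w ∨ p.2 = w)).card
      = ((C.erase w).filter (fun y => (y < w ∧ μ w < μ y) ∨ (w < y ∧ μ y < μ w))).card := by
  apply Finset.card_nbij' (i := fun p => if p.1 = w then p.2 else p.1)
    (j := fun y => if y < w then (y, w) else (w, y))
  · rintro ⟨a, b⟩ hp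
    simp only [Finset.mem_coe, Finset.mem_filter, Finset.mem_product] at hp
    obtain ⟨⟨⟨ha, hb⟩, hab, hm⟩, htouch⟩ := hp
    by_cases h1 : a = w
    · simp only [Finset.mem_coe, if_pos h1, Finset.mem_filter, Finset.mem_erase]
      subst h1
      exact ⟨⟨by omega, hb⟩, Or.inr ⟨hab, hm⟩⟩
    · have h2 : b = w := by tauto
      simp only [Finset.mem_coe, if_neg h1, Finset.mem_filter, Finset.mem_erase]
      subst h2
      exact ⟨⟨h1, ha⟩, Or.inl ⟨hab, hm⟩⟩
  · intro y hy
    simp only [Finset.mem_coe, Finset.mem_filter, Finset.mem_erase] at hy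
    obtain ⟨⟨hne, hyC⟩, hQ⟩ := hy
    by_cases h : y < w
    · simp only [Finset.mem_coe, if_pos h, Finset.mem_filter, Finset.mem_product]
      rcases hQ with ⟨_, hm⟩ | ⟨h2, _⟩
      · exact ⟨⟨⟨hyC, hw⟩, h, hm⟩, by simp⟩
      · omega
    · have hwy : w < y := by omega
      simp only [Finset.mem_coe, if_neg h, Finset.mem_filter, Finset.mem_product]
      rcases hQ with ⟨h2, _⟩ | ⟨_, hm⟩
      · omega
      · exact ⟨⟨⟨hw, hyC⟩, hwy, hm⟩, by simp⟩
  · rintro ⟨a, b⟩ hp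
    simp only [Finset.mem_coe, Finset.mem_filter, Finset.mem_product] at hp
    obtain ⟨⟨⟨ha, hb⟩, hab, hm⟩, htouch⟩ := hp
    by_cases h1 : a = w
    · subst h1
      have hnb : ¬ b < a := by omega
      simp [hnb]
    · have h2 : b = w := by tauto
      subst h2
      simp [h1, hab]
  · intro y hy
    simp only [Finset.mem_coe, Finset.mem_filter, Finset.mem_erase] at hy
    obtain ⟨⟨hne, hyC⟩, _⟩ := hy
    by_cases h : y < w
    · simp [h, hne]
    · simp [h]

lemma psi_move {q x : ℕ} {B : Finset ℕ} (hq : 0 < q) (hx : x ∈ B) (hxq : q ≤ x)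
    (hnot : x - q ∉ B) :
    (-1 : ℤ) ^ (psi q (insert (x - q) (B.erase x)))
      * (-1) ^ ((B.filter (fun y => x - q < y ∧ y < x)).card) = (-1) ^ (psi q B) := by
  classical
  set B' := insert (x - q) (B.erase x) with hB'
  set E := B.erase x with hE
  set m := mfun q B with hm
  set m' := mfun q B' with hm'
  have hEB' : B'.erase (x - q) = E := by
    rw [hB', Finset.erase_insert]
    intro hmem
    exact hnot (Finset.mem_of_mem_erase hmem)
  have hxq' : x - q ∈ B' := Finset.mem_insert_self _ _
  -- outer parts agree
  have hout : ((B ×ˢ B).filter (fun p => p.1 < p.2 ∧ m p.2 < m p.1)).filter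
        (fun p => ¬(p.1 = x ∨ p.2 = x))
      = ((E ×ˢ E).filter (fun p => p.1 < p.2 ∧ m p.2 < m p.1)) := by
    ext ⟨a, b⟩
    simp only [Finset.mem_filter, Finset.mem_product, Finset.mem_erase, hE]
    tauto
  have hout' : ((B' ×ˢ B').filter (fun p => p.1 < p.2 ∧ m' p.2 < m' p.1)).filter
        (fun p => ¬(p.1 = x - q ∨ p.2 = x - q))
      = ((E ×ˢ E).filter (fun p => p.1 < p.2 ∧ m' p.2 < m' p.1)) := by
    ext ⟨a, b⟩
    have : (a ∈ B' ∧ a ≠ x - q) ↔ a ∈ E := by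
      rw [← hEB']; simp [Finset.mem_erase, and_comm]
    have hb2 : (b ∈ B' ∧ b ≠ x - q) ↔ b ∈ E := by
      rw [← hEB']; simp [Finset.mem_erase, and_comm]
    simp only [Finset.mem_filter, Finset.mem_product]
    tauto
  have hmm : ∀ y ∈ E, m' y = m y := by
    intro y hy
    rw [hE, Finset.mem_erase] at hy
    exact mfun_move hq hx hxq hnot y hy.2 hy.1
  have houtcong : ((E ×ˢ E).filter (fun p => p.1 < p.2 ∧ m' p.2 < m' p.1))
      = ((E ×ˢ E).filter (fun p => p.1 < p.2 ∧ m p.2 < m p.1)) := by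
    apply Finset.filter_congr
    rintro ⟨a, b⟩ hp
    simp only [Finset.mem_product] at hp
    rw [hmm a hp.1, hmm b hp.2]
  -- split psi into touch + out
  have hsplitB : psi q B
      = (((B ×ˢ B).filter (fun p => p.1 < p.2 ∧ m p.2 < m p.1)).filter
          (fun p => p.1 = x ∨ p.2 = x)).card
        + ((E ×ˢ E).filter (fun p => p.1 < p.2 ∧ m p.2 < m p.1)).card := by
    rw [← hout]
    exact (Finset.card_filter_add_card_filter_not _).symm
  have hsplitB' : psi q B'
      = (((B' ×ˢ B').filter (fun p => p.1 < p.2 ∧ m' p.2 < m' p.1)).filter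
          (fun p => p.1 = x - q ∨ p.2 = x - q)).card
        + ((E ×ˢ E).filter (fun p => p.1 < p.2 ∧ m p.2 < m p.1)).card := by
    rw [← houtcong, ← hout']
    exact (Finset.card_filter_add_card_filter_not _).symm
  -- touch parts
  have htB := touch_card B m x hx
  have htB' := touch_card B' m' (x - q) hxq'
  rw [hEB'] at htB'
  have hmx : m' (x - q) = m x := mfun_move_x hq hx hxq hnot
  have htB'2 : (((B' ×ˢ B').filter (fun p => p.1 < p.2 ∧ m' p.2 < m' p.1)).filter
        (fun p => p.1 = x - q ∨ p.2 = x - q)).card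
      = (E.filter (fun y => (y < x - q ∧ m x < m y) ∨ (x - q < y ∧ m y < m x))).card := by
    rw [htB']
    congr 1
    apply Finset.filter_congr
    intro y hy
    rw [hmm y hy, hmx]
  -- one-dimensional comparison
  set L := (B.filter (fun y => x - q < y ∧ y < x)).card with hL
  have card_split : ∀ (p r : ℕ → Prop), (hp : DecidablePred p) → (hr : DecidablePred r) →
      (E.filter p).card = (E.filter (fun y => p y ∧ r y)).card
        + (E.filter (fun y => p y ∧ ¬ r y)).card := by
    intro p r hp hr
    rw [← Finset.filter_filter, ← Finset.filter_filter]
    exact (Finset.card_filter_add_card_filter_not (s := E.filter p) r).symm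
  have hQs := card_split (fun y => (y < x ∧ m x < m y) ∨ (x < y ∧ m y < m x))
    (fun y => x - q < y ∧ y < x) (by infer_instance) (by infer_instance)
  have hRs := card_split (fun y => (y < x - q ∧ m x < m y) ∨ (x - q < y ∧ m y < m x))
    (fun y => x - q < y ∧ y < x) (by infer_instance) (by infer_instance)
  have hmemE : ∀ y ∈ E, y ∈ B ∧ y ≠ x ∧ y ≠ x - q := by
    intro y hy
    rw [hE, Finset.mem_erase] at hy
    refine ⟨hy.2, hy.1, ?_⟩
    rintro rfl
    exact hnot hy.2
  -- outside the window the predicates agree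
  have e1 : E.filter (fun y => ((y < x ∧ m x < m y) ∨ (x < y ∧ m y < m x)) ∧ ¬(x - q < y ∧ y < x))
      = E.filter (fun y => ((y < x - q ∧ m x < m y) ∨ (x - q < y ∧ m y < m x)) ∧ ¬(x - q < y ∧ y < x)) := by
    apply Finset.filter_congr
    intro y hy
    obtain ⟨hyB, hyx, hyxq⟩ := hmemE y hy
    constructor
    · rintro ⟨hd | hd, hnm⟩
      · exact ⟨Or.inl ⟨by omega, hd.2⟩, hnm⟩
      · exact ⟨Or.inr ⟨by omega, hd.2⟩, hnm⟩
    · rintro ⟨hd | hd, hnm⟩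
      · exact ⟨Or.inl ⟨by omega, hd.2⟩, hnm⟩
      · rcases Nat.lt_or_ge y x with h | h
        · omega
      
        · exact ⟨Or.inr ⟨by omega, hd.2⟩, hnm⟩
  -- inside the window: residues differ so exactly one direction holds
  have hne_mid : ∀ y, y ∈ B → x - q < y → y < x → m y ≠ m x := by
    intro y hyB h1 h2 hcon
    have r1 := mfun_mod hq B y
    have r2 := mfun_mod hq B x
    rw [hm] at hcon
    have : y % q = x % q := by rw [← r1, ← r2, hcon]
    have := same_mod_le hq this h2
    omega
  have e2 : E.filter (fun y => ((y < x ∧ m x < m y) ∨ (x < y ∧ m y < m x)) ∧ (x - q < y ∧ y < x))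
      = E.filter (fun y => (x - q < y ∧ y < x) ∧ m x < m y) := by
    apply Finset.filter_congr
    intro y hy
    obtain ⟨hyB, hyx, hyxq⟩ := hmemE y hy
    constructor
    · rintro ⟨hd | hd, hmi⟩
      · exact ⟨hmi, hd.2⟩
      · omega
    · rintro ⟨hmi, hlt⟩
      exact ⟨Or.inl ⟨by omega, hlt⟩, hmi⟩
  have e3 : E.filter (fun y => ((y < x - q ∧ m x < m y) ∨ (x - q < y ∧ m y < m x)) ∧ (x - q < y ∧ y < x))
      = E.filter (fun y => (x - q < y ∧ y < x) ∧ ¬ (m x < m y)) := by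
    apply Finset.filter_congr
    intro y hy
    obtain ⟨hyB, hyx, hyxq⟩ := hmemE y hy
    constructor
    · rintro ⟨hd | hd, hmi⟩
      · omega
      · have := hne_mid y hyB hmi.1 hmi.2
        exact ⟨hmi, by omega⟩
    · rintro ⟨hmi, hnlt⟩
      have := hne_mid y hyB hmi.1 hmi.2
      exact ⟨Or.inr ⟨by omega, by omega⟩, hmi⟩
  have hLsplit := card_split (fun y => x - q < y ∧ y < x) (fun y => m x < m y)
    (by infer_instance) (by infer_instance)
  have hLE : (E.filter (fun y => x - q < y ∧ y < x)).card = L := by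
    rw [hL]
    congr 1
    ext y
    simp only [hE, Finset.mem_filter, Finset.mem_erase]
    constructor
    · rintro ⟨⟨h1, h2⟩, h3⟩; exact ⟨h2, h3⟩
    · rintro ⟨h1, h2⟩
      exact ⟨⟨by omega, h1⟩, h2⟩
  -- reorder the conjunction inside hLsplit terms to match e2/e3
  have e2' : (E.filter (fun y => (x - q < y ∧ y < x) ∧ m x < m y)).card
      + (E.filter (fun y => (x - q < y ∧ y < x) ∧ ¬ (m x < m y))).card = L := by
    rw [← hLE, hLsplit]
  -- assemble the ℕ identity
  have key : psi q B + psi q B' = L + 2 *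
      ((E.filter (fun y => ((y < x ∧ m x < m y) ∨ (x < y ∧ m y < m x)) ∧ ¬(x - q < y ∧ y < x))).card
        + ((E ×ˢ E).filter (fun p => p.1 < p.2 ∧ m p.2 < m p.1)).card) := by
    rw [hsplitB, hsplitB', htB, htB'2, hQs, hRs, e2, e3, e1]
    omega
  have hpar : psi q B % 2 = (psi q B' + L) % 2 := by omega
  calc (-1 : ℤ) ^ psi q B' * (-1) ^ L = (-1) ^ (psi q B' + L) := (pow_add _ _ _).symm
    _ = (-1) ^ psi q B := neg_one_pow_congr hpar.symm

noncomputable def Bset (lam : ℕ → ℕ) (n : ℕ) : Finset ℕ :=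
  (Finset.range n).image (fun k => lam k + (n - 1 - k))

section Bridge
variable {lam : ℕ → ℕ} {n : ℕ}

lemma bfun_strictAnti (hmono : ∀ i j, i ≤ j → lam j ≤ lam i) {k k' : ℕ}
    (h : k < k') (h2 : k' < n) : lam k' + (n - 1 - k') < lam k + (n - 1 - k) := by
  have := hmono k k' (le_of_lt h)
  omega

lemma mem_Bset {y : ℕ} : y ∈ Bset lam n ↔ ∃ k, k < n ∧ y = lam k + (n - 1 - k) := by
  simp [Bset, eq_comm]

variable (hlam : IsPartitionFun lam) (hbd : ∀ k, n ≤ k → lam k = 0) {i j : ℕ} (hij : j < lam i)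
include hlam hbd hij

lemma conj_le_n : conjFun lam j ≤ n := by
  by_contra hc
  have h1 := lt_of_lt_conj (j := j) hlam (show n < conjFun lam j by omega)
  rw [hbd n (le_refl n)] at h1; omega

include hij in
lemma row_lt_n : i < n := by
  by_contra hc
  rw [hbd i (by omega)] at hij; omega

/-- Main bridge: all the β-set facts for removing the (i,j) hook. -/
lemma bridge :
    let c := conjFun lam j
    let x := lam i + (n - 1 - i)
    let b := j + (n - c)
    x ∈ Bset lam n ∧ b ∉ Bset lam n ∧ b < x ∧ x - b = hookLength lam i j ∧
    Bset (removeHook lam i j) n = insert b ((Bset lam n).erase x) ∧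
    legLength lam i j = ((Bset lam n).filter (fun y => b < y ∧ y < x)).card := by
  intro c x b
  have hmono := hlam.1
  have hic : i < c := i_lt_conj hlam hij
  have hcn : c ≤ n := conj_le_n hlam hbd hij
  have hin : i < n := row_lt_n hlam hbd hij
  have hlow : ∀ r, r < c → j < lam r := fun r hr => lt_of_lt_conj hlam hr
  have hhigh : ∀ r, c ≤ r → lam r ≤ j := fun r hr => le_of_ge_conj hlam hr
  have hxmem : x ∈ Bset lam n := mem_Bset.2 ⟨i, hin, rfl⟩
  have hbx : b < x := by
    have := hlow i hic
    simp only [x, b]; omega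
  have hbnot : b ∉ Bset lam n := by
    rw [mem_Bset]
    rintro ⟨k, hk, hkb⟩
    rcases lt_or_ge k c with h | h
    · have := hlow k h
      simp only [b] at hkb; omega
    · have := hhigh k h
      simp only [b] at hkb; omega
  have hhook : x - b = hookLength lam i j := by
    simp only [x, b, hookLength]
    have := hlow i hic
    omega
  refine ⟨hxmem, hbnot, hbx, hhook, ?_, ?_⟩
  · -- Bset equality
    ext y
    simp only [Finset.mem_insert, Finset.mem_erase, mem_Bset]
    constructor
    · rintro ⟨k, hk, rfl⟩
      rcases lt_or_ge k i with h | h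
      · rw [removeHook_lt h]
        refine Or.inr ⟨?_, k, hk, rfl⟩
        have := bfun_strictAnti hmono h hin
        simp only [x]; omega
      rcases lt_or_ge (k+1) c with h2 | h2
      · rw [removeHook_mid h h2]
        refine Or.inr ⟨?_, k+1, by omega, ?_⟩
        · have hne : lam (k+1) + (n-1-(k+1)) < x := bfun_strictAnti hmono (show i < k+1 by omega) (by omega)
          have := hlow (k+1) h2
          simp only [x] at hne ⊢; omega
        · have := hlow (k+1) h2
          omega
      rcases eq_or_lt_of_le h2 with h3 | h3
      · rw [removeHook_last h h3.symm]
        left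
        simp only [b]
        omega
      · rw [removeHook_ge (by omega) hic]
        refine Or.inr ⟨?_, k, hk, rfl⟩
        have := bfun_strictAnti hmono (show i < k by omega) hk
        simp only [x]; omega
    · rintro (rfl | ⟨hne, k, hk, rfl⟩)
      · refine ⟨c-1, by omega, ?_⟩
        rw [removeHook_last (by omega) (by omega)]
        simp only [b]; omega
      · have hki : k ≠ i := by
          intro h; apply hne; rw [h]
        rcases lt_or_ge k i with h | h
        · exact ⟨k, hk, by rw [removeHook_lt h]⟩
        rcases lt_or_ge k c with h2 | h2
        · -- i < k < c : preimage is k-1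
          have hik : i < k := by omega
          refine ⟨k-1, by omega, ?_⟩
          rw [removeHook_mid (by omega) (by omega : k-1+1 < conjFun lam j)]
          have h4 : k - 1 + 1 = k := by omega
          rw [h4]
          have := hlow k h2
          omega
        · exact ⟨k, hk, by rw [removeHook_ge h2 hic]⟩
  · -- leg length
    have hset : (Bset lam n).filter (fun y => b < y ∧ y < x)
        = (Finset.Ioo i c).image (fun k => lam k + (n - 1 - k)) := by
      ext y
      simp only [Finset.mem_filter, Finset.mem_image, Finset.mem_Ioo, mem_Bset]
      have hxv : x = lam i + (n - 1 - i) := rfl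
      have hbv : b = j + (n - c) := rfl
      constructor
      · rintro ⟨⟨k, hk, rfl⟩, hb, hx⟩
        rw [hxv] at hx
        rw [hbv] at hb
        refine ⟨k, ⟨?_, ?_⟩, rfl⟩
        · by_contra hc2
          have hki : k ≤ i := by omega
          rcases eq_or_lt_of_le hki with h | h
          · subst h; omega
          · have := bfun_strictAnti hmono h hin
            omega
        · by_contra hc2
          have := hhigh k (by omega)
          omega
      · rintro ⟨k, ⟨h1, h2⟩, rfl⟩
        rw [hxv, hbv]
        have hkn : k < n := by omega
        refine ⟨⟨k, hkn, rfl⟩, ?_, ?_⟩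
        · have := hlow k h2
          omega
        · have := bfun_strictAnti hmono h1 hkn
          omega
    have hinj : Set.InjOn (fun k => lam k + (n - 1 - k)) (Finset.Ioo i c) := by
      intro a ha a' ha' hco
      simp only [Finset.coe_Ioo, Set.mem_Ioo] at ha ha'
      by_contra hne
      rcases Nat.lt_or_ge a a' with h | h
      · exact absurd hco (Nat.ne_of_gt (bfun_strictAnti hmono h (by omega)))
      · exact absurd hco (Nat.ne_of_lt (bfun_strictAnti hmono (by omega) (by omega)))
    rw [hset, Finset.card_image_of_injOn hinj, Nat.card_Ioo]
    rfl

end Bridge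

section Core
variable {q n : ℕ} {mu : ℕ → ℕ}

/-- a q-core's β-set is closed under subtracting q -/
lemma core_closed (hq : 0 < q) (hmu : IsPartitionFun mu) (hbd : ∀ k, n ≤ k → mu k = 0)
    (hcore : IsQCore q mu) : ∀ x ∈ Bset mu n, q ≤ x → x - q ∈ Bset mu n := by
  intro x hx hqx
  by_contra hnot
  obtain ⟨i, hin, rfl⟩ := mem_Bset.1 hx
  have hmono := hmu.1
  -- the complement of B below x
  set Cfin := (Finset.range (mu i + (n - 1 - i))).filter (fun z => z ∉ Bset mu n) with hC
  -- B ∩ [0, x) is the image of rows > i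
  have hBx : (Finset.range (mu i + (n - 1 - i))).filter (fun z => z ∈ Bset mu n)
      = (Finset.Ioo i n).image (fun k => mu k + (n - 1 - k)) := by
    ext y
    simp only [Finset.mem_filter, Finset.mem_range, Finset.mem_image, Finset.mem_Ioo]
    constructor
    · rintro ⟨hy1, hy2⟩
      obtain ⟨k, hk, rfl⟩ := mem_Bset.1 hy2
      refine ⟨k, ⟨?_, hk⟩, rfl⟩
      by_contra hc
      rcases eq_or_lt_of_le (not_lt.1 hc) with h | h
      · subst h; omega
      · have := bfun_strictAnti (n := n) hmono h hin
        omega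
    · rintro ⟨k, ⟨h1, h2⟩, rfl⟩
      have := bfun_strictAnti (n := n) hmono h1 h2
      exact ⟨by omega, mem_Bset.2 ⟨k, h2, rfl⟩⟩
  have hBxcard : ((Finset.range (mu i + (n - 1 - i))).filter (fun z => z ∈ Bset mu n)).card
      = n - 1 - i := by
    have hinj2 : Set.InjOn (fun k => mu k + (n - 1 - k)) (Finset.Ioo i n) := by
      intro a ha a' ha' hco
      simp only [Finset.coe_Ioo, Set.mem_Ioo] at ha ha'
      by_contra hne
      rcases Nat.lt_or_ge a a' with h | h
      · exact absurd hco (Nat.ne_of_gt (bfun_strictAnti hmono h ha'.2))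
      · exact absurd hco (Nat.ne_of_lt (bfun_strictAnti hmono (by omega) ha.2))
    rw [hBx, Finset.card_image_of_injOn hinj2, Nat.card_Ioo]
    omega
  have hCcard : Cfin.card = mu i := by
    have := Finset.card_filter_add_card_filter_not
      (s := Finset.range (mu i + (n - 1 - i))) (fun z => z ∈ Bset mu n)
    simp only [Finset.card_range] at this
    have hxi : i ≤ n - 1 := by omega
    rw [hC]
    omega
  -- the map g enumerates the complement
  set g := fun j => j + (n - conjFun mu j) with hg
  have hconj_le : ∀ j, conjFun mu j ≤ n := by
    intro j
    by_contra hc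
    have h1 := (lt_conjFun_iff hmu n j).1 (by omega)
    rw [hbd n (le_refl n)] at h1; omega
  have hgmem : ∀ j, j < mu i → g j ∈ Cfin := by
    intro j hj
    have hcj : i < conjFun mu j := (lt_conjFun_iff hmu i j).2 hj
    have hcjn := hconj_le j
    rw [hC, Finset.mem_filter, Finset.mem_range]
    constructor
    · simp only [hg]; omega
    · intro hmem
      obtain ⟨k, hk, hkeq⟩ := mem_Bset.1 hmem
      simp only [hg] at hkeq
      rcases Nat.lt_or_ge k (conjFun mu j) with h | h
      · have := (lt_conjFun_iff hmu k j).1 h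
        omega
      · have h2 : ¬ (k < conjFun mu j) := by omega
        have h3 : mu k ≤ j := by
          by_contra hc
          exact h2 ((lt_conjFun_iff hmu k j).2 (by omega))
        omega
  have hginj : Set.InjOn g (Finset.range (mu i)) := by
    intro a ha a' ha' hco
    simp only [Finset.coe_range, Set.mem_Iio] at ha ha'
    by_contra hne
    have key : ∀ b b', b < b' → b' < mu i → g b < g b' := by
      intro b b' hbb hbi
      have h1 : conjFun mu b' ≤ conjFun mu b := by
        by_contra hc
        have h2 := (lt_conjFun_iff hmu (conjFun mu b) b').1 (by omega)
        have h3 : ¬ (conjFun mu b < conjFun mu b) := lt_irrefl _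
        have h4 := (lt_conjFun_iff hmu (conjFun mu b) b).2 (lt_of_le_of_lt (by omega) h2)
        omega
      have := hconj_le b
      simp only [hg]; omega
    rcases Nat.lt_or_ge a a' with h | h
    · exact absurd hco (Nat.ne_of_lt (key a a' h ha'))
    · exact absurd hco (Nat.ne_of_gt (key a' a (by omega) ha))
  have himage : (Finset.range (mu i)).image g = Cfin := by
    apply Finset.eq_of_subset_of_card_le
    · intro z hz
      obtain ⟨j, hj, rfl⟩ := Finset.mem_image.1 hz
      exact hgmem j (Finset.mem_range.1 hj)
    · rw [Finset.card_image_of_injOn hginj, Finset.card_range, hCcard]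
  -- x - q is in the complement
  have hxqC : (mu i + (n - 1 - i)) - q ∈ Cfin := by
    rw [hC, Finset.mem_filter, Finset.mem_range]
    exact ⟨by omega, hnot⟩
  rw [← himage, Finset.mem_image] at hxqC
  obtain ⟨j, hj, hjeq⟩ := hxqC
  rw [Finset.mem_range] at hj
  have hcj : i < conjFun mu j := (lt_conjFun_iff hmu i j).2 hj
  have hcjn := hconj_le j
  apply hcore i j hj
  simp only [hg] at hjeq
  simp only [hookLength]
  omega

lemma core_mfun (hq : 0 < q) {B : Finset ℕ} (hcl : ∀ x ∈ B, q ≤ x → x - q ∈ B) :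
    ∀ x ∈ B, mfun q B x = x := by
  intro x
  induction x using Nat.strong_induction_on with
  | _ x ih =>
    intro hx
    rcases Nat.lt_or_ge x q with h | h
    · have hempty : B.filter (fun z => z < x ∧ z % q = x % q) = ∅ := by
        rw [Finset.filter_eq_empty_iff]
        intro z hz
        rintro ⟨h1, h2⟩
        rw [Nat.mod_eq_of_lt h] at h2
        have : z % q ≤ z := Nat.mod_le z q
        omega
      rw [mfun, hempty]
      simp [Nat.mod_eq_of_lt h]
    · have hxqB : x - q ∈ B := hcl x hx h
      have ihq := ih (x - q) (by omega) hxqB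
      have hmod : (x - q) % q = x % q := by
        conv_rhs => rw [show x = (x - q) + q by omega]
        rw [Nat.add_mod_right]
      have hfil : B.filter (fun z => z < x ∧ z % q = x % q)
          = insert (x - q) (B.filter (fun z => z < x - q ∧ z % q = (x - q) % q)) := by
        ext z
        simp only [Finset.mem_filter, Finset.mem_insert]
        constructor
        · rintro ⟨hz1, hz2, hz3⟩
          by_cases hzx : z = x - q
          · exact Or.inl hzx
          · have := same_mod_le hq hz3 hz2
            exact Or.inr ⟨hz1, by omega, by omega⟩
        · rintro (rfl | ⟨hz1, hz2, hz3⟩)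
          · exact ⟨hxqB, by omega, hmod⟩
          · exact ⟨hz1, by omega, by omega⟩
      have hnotin : x - q ∉ B.filter (fun z => z < x - q ∧ z % q = (x - q) % q) := by
        simp
      rw [mfun, hfil, Finset.card_insert_of_notMem hnotin]
      rw [mfun] at ihq
      have hmul : q * ((B.filter (fun z => z < x - q ∧ z % q = (x - q) % q)).card + 1) = q * (B.filter (fun z => z < x - q ∧ z % q = (x - q) % q)).card + q := by ring
      omega

lemma core_psi (hq : 0 < q) {B : Finset ℕ} (hcl : ∀ x ∈ B, q ≤ x → x - q ∈ B) :
    psi q B = 0 := by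
  rw [psi, Finset.card_eq_zero, Finset.filter_eq_empty_iff]
  rintro ⟨a, b⟩ hp hcon
  rw [Finset.mem_product] at hp
  rw [core_mfun hq hcl a hp.1, core_mfun hq hcl b hp.2] at hcon
  omega

end Core

section Conj
variable {lam : ℕ → ℕ} {i j : ℕ}

lemma conj_removeHook (hlam : IsPartitionFun lam) (hij : j < lam i) :
    conjFun (removeHook lam i j) = removeHook (conjFun lam) j i := by
  have hmono := hlam.1
  have hcmono := (conj_isPartition hlam).1
  have hic : i < conjFun lam j := (lt_conjFun_iff hlam i j).2 hij
  have hmu := removeHook_isPartition hlam hij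
  have hmumono := hmu.1
  have hcc : conjFun (conjFun lam) i = lam i := congrFun (conj_conj hlam) i
  set c := conjFun lam j with hc
  funext k
  rcases Nat.lt_or_ge k j with hk | hk
  · -- value conjFun lam k
    rw [removeHook_lt hk]
    apply conjFun_eq hmumono
    · -- μ (conj lam k) ≤ k
      have h1 : c ≤ conjFun lam k := hcmono k j (by omega)
      rw [removeHook_ge (by omega) hic]
      by_contra h2
      exact absurd ((lt_conjFun_iff hlam _ k).2 (by omega)) (lt_irrefl _)
    · intro r hr
      have hklam : k < lam r := (lt_conjFun_iff hlam r k).1 hr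
      rcases Nat.lt_or_ge r i with h | h
      · rwa [removeHook_lt h]
      rcases Nat.lt_or_ge (r+1) c with h2 | h2
      · rw [removeHook_mid h h2]
        have := (lt_conjFun_iff hlam (r+1) j).1 h2
        omega
      rcases eq_or_lt_of_le h2 with h3 | h3
      · rw [removeHook_last h h3.symm]
        omega
      · rwa [removeHook_ge (by omega) hic]
  rcases Nat.lt_or_ge (k+1) (lam i) with hk2 | hk2
  · -- value conj lam (k+1) - 1
    have hrw : removeHook (conjFun lam) j i k = conjFun lam (k+1) - 1 :=
      removeHook_mid hk (by rw [hcc]; exact hk2)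
    rw [hrw]
    have him : i < conjFun lam (k+1) := (lt_conjFun_iff hlam i (k+1)).2 hk2
    have hmc : conjFun lam (k+1) ≤ c := hcmono j (k+1) (by omega)
    set m := conjFun lam (k+1) - 1 with hmdef
    have hm1 : m + 1 = conjFun lam (k+1) := by omega
    apply conjFun_eq hmumono
    · rcases eq_or_lt_of_le (show m + 1 ≤ c by omega) with h | h
      · rw [removeHook_last (by omega) h]
        omega
      · rw [removeHook_mid (by omega) h]
        have : lam (m+1) ≤ k+1 := by
          by_contra h2
          exact absurd ((lt_conjFun_iff hlam (m+1) (k+1)).2 (by omega)) (by omega)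
        omega
    · intro r hr
      rcases Nat.lt_or_ge r i with h | h
      · rw [removeHook_lt h]
        have := hmono r i (by omega)
        omega
      · rw [removeHook_mid h (by omega)]
        have := (lt_conjFun_iff hlam (r+1) (k+1)).1 (by omega)
        omega
  rcases eq_or_lt_of_le hk2 with hk3 | hk3
  · -- k + 1 = lam i : value i
    have hrw : removeHook (conjFun lam) j i k = i := by
      have h2 : ¬ (k + 1 < conjFun (conjFun lam) i) := by rw [hcc]; omega
      have h3 : k + 1 = conjFun (conjFun lam) i := by rw [hcc]; omega
      simp only [removeHook, if_neg (by omega : ¬ k < j), if_neg h2, if_pos h3]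
    rw [hrw]
    apply conjFun_eq hmumono
    · rcases eq_or_lt_of_le (show i + 1 ≤ c by omega) with h | h
      · rw [removeHook_last (le_refl i) h]
        omega
      · rw [removeHook_mid (le_refl i) h]
        have := hmono i (i+1) (by omega)
        omega
    · intro r hr
      rw [removeHook_lt hr]
      have := hmono r i (by omega)
      omega
  · -- lam i ≤ k : value conj lam k
    have hrw : removeHook (conjFun lam) j i k = conjFun lam k := by
      have h2 : ¬ (k + 1 < conjFun (conjFun lam) i) := by rw [hcc]; omega
      have h3 : ¬ (k + 1 = conjFun (conjFun lam) i) := by rw [hcc]; omega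
      simp only [removeHook, if_neg (by omega : ¬ k < j), if_neg h2, if_neg h3]
    rw [hrw]
    have hmi : conjFun lam k ≤ i := by
      by_contra h2
      have := (lt_conjFun_iff hlam i k).1 (by omega)
      omega
    apply conjFun_eq hmumono
    · rcases eq_or_lt_of_le hmi with h | h
      · rw [h]
        rcases eq_or_lt_of_le (show i + 1 ≤ c by omega) with h4 | h4
        · rw [removeHook_last (le_refl i) h4]
          omega
        · rw [removeHook_mid (le_refl i) h4]
          have := hmono i (i+1) (by omega)
          omega
      · rw [removeHook_lt h]
        by_contra h2
        exact absurd ((lt_conjFun_iff hlam _ k).2 (by omega)) (lt_irrefl _)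
    · intro r hr
      rw [removeHook_lt (by omega)]
      exact (lt_conjFun_iff hlam r k).1 (by omega)

lemma hook_conj (hlam : IsPartitionFun lam) (hij : j < lam i) :
    i < conjFun lam j ∧ hookLength (conjFun lam) j i = hookLength lam i j ∧
      legLength lam i j + legLength (conjFun lam) j i = hookLength lam i j - 1 := by
  have hic : i < conjFun lam j := (lt_conjFun_iff hlam i j).2 hij
  have hcc : conjFun (conjFun lam) i = lam i := congrFun (conj_conj hlam) i
  refine ⟨hic, ?_, ?_⟩
  · simp only [hookLength, hcc]
    omega
  · simp only [hookLength, legLength, hcc]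
    omega

lemma core_conj {mu : ℕ → ℕ} {q : ℕ} (hmu : IsPartitionFun mu) (hcore : IsQCore q mu) :
    IsQCore q (conjFun mu) := by
  intro a b hab
  have hba : a < mu b := (lt_conjFun_iff hmu b a).1 hab
  have h := hook_conj hmu hba
  rw [show hookLength (conjFun mu) a b = hookLength mu b a from h.2.1]
  exact hcore b a hba

lemma conj_seq {q : ℕ} (hq : Odd q) :
    ∀ (ls : List ℕ) (lam mu : ℕ → ℕ), IsPartitionFun lam →
    IsHookRemovalSeq q lam ls mu →
    ∃ ls' : List ℕ, IsHookRemovalSeq q (conjFun lam) ls' (conjFun mu) ∧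
      (-1 : ℤ) ^ ls'.sum = (-1) ^ ls.sum := by
  intro ls
  induction ls with
  | nil =>
    intro lam mu _ hseq
    refine ⟨[], ?_, rfl⟩
    rw [show mu = lam from hseq]
    show conjFun lam = conjFun lam
    rfl
  | cons l ls ih =>
    intro lam mu hlam hseq
    obtain ⟨i, j, hij, hh, hl, hrest⟩ := hseq
    have hmu1 := removeHook_isPartition hlam hij
    obtain ⟨ls2, hseq2, hsum2⟩ := ih (removeHook lam i j) mu hmu1 hrest
    obtain ⟨hic, hhook, hleg⟩ := hook_conj hlam hij
    set l' := legLength (conjFun lam) j i with hl'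
    refine ⟨l' :: ls2, ⟨j, i, hic, by rw [hhook, hh], rfl, ?_⟩, ?_⟩
    · rw [← conj_removeHook hlam hij]
      exact hseq2
    · have hq1 : 1 ≤ q := by
        rcases hq with ⟨m, hm⟩; omega
    -- parity : l + l' = q - 1 even
      have hpar : (l + l') % 2 = 0 := by
        obtain ⟨m, hm⟩ := hq
        rw [hh] at hleg
        rw [← hl]
        omega
      simp only [List.sum_cons]
      rw [pow_add, pow_add, hsum2]
      congr 1
      apply neg_one_pow_congr
      omega

end Conj


-- main sequence invariant
lemma seq_invariant {q : ℕ} (hq0 : 0 < q) {n : ℕ} :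
    ∀ (ls : List ℕ) (lam mu : ℕ → ℕ), (∀ i j, i ≤ j → lam j ≤ lam i) →
    (∀ k, n ≤ k → lam k = 0) → IsHookRemovalSeq q lam ls mu →
    ((∀ i j, i ≤ j → mu j ≤ mu i) ∧ (∀ k, n ≤ k → mu k = 0) ∧
      (-1 : ℤ) ^ ls.sum * (-1) ^ (psi q (Bset mu n)) = (-1) ^ (psi q (Bset lam n))) := by
  intro ls
  induction ls with
  | nil =>
    intro lam mu hmono hbd hseq
    rw [show mu = lam from hseq]
    exact ⟨hmono, hbd, by simp⟩
  | cons l ls ih =>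
    intro lam mu hmono hbd hseq
    obtain ⟨i, j, hij, hh, hl, hrest⟩ := hseq
    have hlam : IsPartitionFun lam := ⟨hmono, n, hbd⟩
    obtain ⟨hx, hbnot, hbx, hhook, hBeq, hlegcard⟩ := bridge hlam hbd hij
    have hmu1 := removeHook_isPartition hlam hij
    have hbd1 : ∀ k, n ≤ k → removeHook lam i j k = 0 := by
      intro k hk
      have := removeHook_le hlam hij k
      have := hbd k hk
      omega
    obtain ⟨hmumono, hmubd, hIH⟩ := ih (removeHook lam i j) mu hmu1.1 hbd1 hrest
    refine ⟨hmumono, hmubd, ?_⟩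
    -- identify b with x - q
    set x := lam i + (n - 1 - i) with hxdef
    set b := j + (n - conjFun lam j) with hbdef
    have hbq : b = x - q := by
      rw [hh] at hhook
      omega
    have hqx : q ≤ x := by omega
    have hmove := psi_move (x := x) (B := Bset lam n) hq0 hx hqx (by rw [← hbq]; exact hbnot)
    rw [← hbq, ← hBeq] at hmove
    have hLl : ((Bset lam n).filter (fun y => b < y ∧ y < x)).card = l := by
      rw [← hl, hlegcard]
    rw [hLl] at hmove
    simp only [List.sum_cons]
    rw [pow_add]
    calc (-1 : ℤ) ^ l * (-1) ^ ls.sum * (-1) ^ psi q (Bset mu n)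
        = (-1) ^ ls.sum * (-1) ^ psi q (Bset mu n) * (-1) ^ l := by ring
      _ = (-1) ^ psi q (Bset (removeHook lam i j) n) * (-1) ^ l := by rw [hIH]
      _ = (-1) ^ psi q (Bset lam n) := hmove

/-- the sign of any removal sequence to a core equals the canonical invariant -/
lemma sign_canonical {q : ℕ} (hq0 : 0 < q) {n : ℕ} {lam : ℕ → ℕ}
    (hmono : ∀ i j, i ≤ j → lam j ≤ lam i) (hbd : ∀ k, n ≤ k → lam k = 0)
    {ls : List ℕ} {mu : ℕ → ℕ} (hseq : IsHookRemovalSeq q lam ls mu) (hcore : IsQCore q mu) :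
    (-1 : ℤ) ^ ls.sum = (-1) ^ (psi q (Bset lam n)) := by
  obtain ⟨hmumono, hmubd, heq⟩ := seq_invariant hq0 ls lam mu hmono hbd hseq
  have hcl := core_closed hq0 ⟨hmumono, n, hmubd⟩ hmubd hcore
  rw [core_psi hq0 hcl] at heq
  simpa using heq

end Stmt7Aux

/-- For odd `q`, the `q`-sign `δ_q(lam) = (-1)^{L(c_1)+⋯+L(c_k)}` is
well defined (independent of the removal sequence of `q`-hooks from `lam` down to its
`q`-core), and `δ_q(lam) = δ_q(lam*)`. -/
theorem stmt_7 (q : ℕ) (hq : Odd q) (lam : ℕ → ℕ) (hlam : IsPartitionFun lam) :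
    (∀ ls1 mu1 ls2 mu2, IsHookRemovalSeq q lam ls1 mu1 → IsQCore q mu1 →
      IsHookRemovalSeq q lam ls2 mu2 → IsQCore q mu2 →
      ((-1 : ℤ) ^ ls1.sum = (-1 : ℤ) ^ ls2.sum)) ∧
    (∀ ls mu ls' mu', IsHookRemovalSeq q lam ls mu → IsQCore q mu →
      IsHookRemovalSeq q (conjFun lam) ls' mu' → IsQCore q mu' →
      ((-1 : ℤ) ^ ls.sum = (-1 : ℤ) ^ ls'.sum)) := by
  obtain ⟨hmono, N, hN⟩ := hlam
  have hlam' : IsPartitionFun lam := ⟨hmono, N, hN⟩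
  have hq0 : 0 < q := by rcases hq with ⟨m, hm⟩; omega
  constructor
  · intro ls1 mu1 ls2 mu2 h1 hc1 h2 hc2
    rw [Stmt7Aux.sign_canonical hq0 hmono hN h1 hc1,
      Stmt7Aux.sign_canonical hq0 hmono hN h2 hc2]
  · intro ls mu ls' mu' h1 hc1 h2 hc2
    obtain ⟨ls2, hseq2, hsum2⟩ := Stmt7Aux.conj_seq hq ls lam mu hlam' h1
    obtain ⟨hmumono, hmubd, -⟩ := Stmt7Aux.seq_invariant hq0 ls lam mu hmono hN h1
    have hcore2 := Stmt7Aux.core_conj ⟨hmumono, N, hmubd⟩ hc1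
    obtain ⟨hcmono, Nc, hNc⟩ := Stmt7Aux.conj_isPartition hlam'
    rw [← hsum2,
      Stmt7Aux.sign_canonical hq0 hcmono hNc hseq2 hcore2,
      Stmt7Aux.sign_canonical hq0 hcmono hNc h2 hc2]
end

section
/- Let q be an odd integer, λ a bar partition with q̄-quotient λ^{(q̄)} = (λ^0, λ^1, …, λ^e) where e = (q−1)/2. Then σ(λ) = σ(λ_{(q̄)}) · σ(λ^{(q̄)}), where σ(λ^{(q̄)}) := (−1)^{w − ℓ(λ^0)} and w = |λ^0| + |λ^1| + ⋯ + |λ^e| is the q̄-weight of λ. -/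
open scoped BigOperators

/-- `IsBarRemoval q X Y`: the bar partition `Y` (encoded as its finite set of distinct
positive parts) is obtained from the bar partition `X` by removing a single `q`-bar:
either decrease a part `a > q` to `a - q` (when `a - q` is not already a part), or remove
a part equal to `q`, or remove two distinct parts whose lengths sum to `q`. -/
def IsBarRemoval (q : ℕ) (X Y : Finset ℕ) : Prop :=
  (∃ a ∈ X, q < a ∧ a - q ∉ X ∧ Y = insert (a - q) (X.erase a)) ∨
  (q ∈ X ∧ Y = X.erase q) ∨
  (∃ a b, a ∈ X ∧ b ∈ X ∧ b < a ∧ a + b = q ∧ Y = (X.erase a).erase b)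

/-- `BarSeq q k X Y`: `Y` is obtained from `X` by removing `k` successive `q`-bars. -/
def BarSeq (q : ℕ) : ℕ → Finset ℕ → Finset ℕ → Prop
  | 0, X, Y => Y = X
  | k + 1, X, Y => ∃ Z, IsBarRemoval q X Z ∧ BarSeq q k Z Y

/-- `Y` is a `q̄`-core: no `q`-bar can be removed from it. -/
def IsBarCore (q : ℕ) (Y : Finset ℕ) : Prop := ∀ Z, ¬ IsBarRemoval q Y Z

/-- The sign `σ(X) = (-1)^{|X| - ℓ(X)}` of a bar partition. -/
def barSign (X : Finset ℕ) : ℤˣ := (-1 : ℤˣ) ^ ((∑ a ∈ X, (a : ℤ)) - (X.card : ℤ))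

lemma neg_one_zpow_congr {m n : ℤ} (h : Even (m - n)) : (-1 : ℤˣ)^m = (-1 : ℤˣ)^n := by
  have h1 : (-1:ℤˣ)^(m-n) = 1 := h.neg_one_zpow
  have : (-1:ℤˣ)^m = (-1:ℤˣ)^(m - n) * (-1:ℤˣ)^n := by
    rw [← zpow_add]; ring_nf
  rw [this, h1, one_mul]

lemma core_filter (q : ℕ) (hq : Odd q) (Y : Finset ℕ) (h0 : 0 ∉ Y)
    (hcore : ∀ Z, ¬ IsBarRemoval q Y Z) :
    Y.filter (fun a => q ∣ a) = ∅ := by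
  rw [Finset.filter_eq_empty_iff]
  intro a
  induction a using Nat.strong_induction_on with
  | _ a ih =>
    intro ha hdvd
    have hq0 : 0 < q := hq.pos
    have ha0 : 0 < a := Nat.pos_of_ne_zero (fun h => h0 (h ▸ ha))
    have hqa : q ≤ a := Nat.le_of_dvd ha0 hdvd
    rcases eq_or_lt_of_le hqa with heq | hlt
    · exact hcore (Y.erase q) (Or.inr (Or.inl ⟨heq ▸ ha, rfl⟩))
    · by_cases hm : a - q ∈ Y
      · exact ih (a - q) (by omega) hm (Nat.dvd_sub hdvd dvd_rfl)
      · exact hcore _ (Or.inl ⟨a, ha, hlt, hm, rfl⟩)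

lemma step (q : ℕ) (hq : Odd q) (X Z : Finset ℕ) (h0 : 0 ∉ X) (h : IsBarRemoval q X Z) :
    0 ∉ Z ∧ barSign X = barSign Z *
      (-1:ℤˣ) ^ ((1:ℤ) - ((X.filter (fun a => q ∣ a)).card : ℤ)
        + ((Z.filter (fun a => q ∣ a)).card : ℤ)) := by
  obtain ⟨k, hk⟩ := hq
  rcases h with ⟨a, ha, hqa, hnm, rfl⟩ | ⟨hqX, rfl⟩ | ⟨a, b, ha, hb, hba, hab, rfl⟩
  · have hZ0 : 0 ∉ insert (a - q) (X.erase a) := by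
      simp only [Finset.mem_insert, Finset.mem_erase]
      push_neg
      exact ⟨by omega, fun _ => h0⟩
    refine ⟨hZ0, ?_⟩
    have hnm' : a - q ∉ X.erase a := fun h => hnm (Finset.mem_of_mem_erase h)
    have hs : ∑ x ∈ insert (a - q) (X.erase a), (x:ℤ) = (∑ x ∈ X, (x:ℤ)) - q := by
      rw [Finset.sum_insert hnm', Finset.sum_erase_eq_sub ha]
      have : ((a - q : ℕ) : ℤ) = (a:ℤ) - q := by omega
      rw [this]; ring
    have hc : ((insert (a - q) (X.erase a)).card : ℤ) = X.card := by
      rw [Finset.card_insert_of_notMem hnm', Finset.card_erase_of_mem ha]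
      have : 1 ≤ X.card := Finset.card_pos.2 ⟨a, ha⟩
      push_cast [Nat.sub_add_cancel this]
      rfl
    have hf : (((insert (a - q) (X.erase a)).filter (fun x => q ∣ x)).card : ℤ)
        = ((X.filter (fun x => q ∣ x)).card : ℤ) := by
      by_cases hd : q ∣ a
      · have hd' : q ∣ a - q := Nat.dvd_sub hd dvd_rfl
        have hmem : a ∈ X.filter (fun x => q ∣ x) := Finset.mem_filter.2 ⟨ha, hd⟩
        have hnmem : a - q ∉ (X.filter (fun x => q ∣ x)).erase a := by
          intro h
          exact hnm (Finset.mem_of_mem_filter _ (Finset.mem_of_mem_erase h))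
        rw [Finset.filter_insert, if_pos hd', Finset.filter_erase,
          Finset.card_insert_of_notMem hnmem, Finset.card_erase_of_mem hmem]
        have : 1 ≤ (X.filter (fun x => q ∣ x)).card := Finset.card_pos.2 ⟨a, hmem⟩
        omega
      · have hd' : ¬ q ∣ a - q := by
          intro h
          exact hd (by have := Nat.dvd_add h (dvd_refl q); rwa [Nat.sub_add_cancel hqa.le] at this)
        have : a ∉ X.filter (fun x => q ∣ x) := by
          simp only [Finset.mem_filter]; tauto
        rw [Finset.filter_insert, if_neg hd', Finset.filter_erase,
          Finset.erase_eq_of_notMem this]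
    unfold barSign
    rw [← zpow_add, hs, hc, hf]
    apply neg_one_zpow_congr
    rw [Int.even_iff]
    omega
  · have hZ0 : 0 ∉ X.erase q := fun h => h0 (Finset.mem_of_mem_erase h)
    refine ⟨hZ0, ?_⟩
    have hs : ∑ x ∈ X.erase q, (x:ℤ) = (∑ x ∈ X, (x:ℤ)) - q := Finset.sum_erase_eq_sub hqX
    have h1 : 1 ≤ X.card := Finset.card_pos.2 ⟨q, hqX⟩
    have hc : ((X.erase q).card : ℤ) = (X.card : ℤ) - 1 := by
      rw [Finset.card_erase_of_mem hqX]; omega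
    have hmem : q ∈ X.filter (fun x => q ∣ x) := Finset.mem_filter.2 ⟨hqX, dvd_refl q⟩
    have h2 : 1 ≤ (X.filter (fun x => q ∣ x)).card := Finset.card_pos.2 ⟨q, hmem⟩
    have hf : (((X.erase q).filter (fun x => q ∣ x)).card : ℤ)
        = ((X.filter (fun x => q ∣ x)).card : ℤ) - 1 := by
      rw [Finset.filter_erase, Finset.card_erase_of_mem hmem]; omega
    unfold barSign
    rw [← zpow_add, hs, hc, hf]
    apply neg_one_zpow_congr
    rw [Int.even_iff]
    omega
  · have hb0 : 0 < b := Nat.pos_of_ne_zero (fun h => h0 (h ▸ hb))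
    have hZ0 : 0 ∉ (X.erase a).erase b :=
      fun h => h0 (Finset.mem_of_mem_erase (Finset.mem_of_mem_erase h))
    refine ⟨hZ0, ?_⟩
    have hbe : b ∈ X.erase a := Finset.mem_erase.2 ⟨Nat.ne_of_lt hba, hb⟩
    have hs : ∑ x ∈ (X.erase a).erase b, (x:ℤ) = (∑ x ∈ X, (x:ℤ)) - q := by
      rw [Finset.sum_erase_eq_sub hbe, Finset.sum_erase_eq_sub ha]
      have : (q:ℤ) = (a:ℤ) + b := by omega
      rw [this]; ring
    have h1 : 1 ≤ X.card := Finset.card_pos.2 ⟨a, ha⟩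
    have h1' : 1 ≤ (X.erase a).card := Finset.card_pos.2 ⟨b, hbe⟩
    have hc : (((X.erase a).erase b).card : ℤ) = (X.card : ℤ) - 2 := by
      rw [Finset.card_erase_of_mem hbe, Finset.card_erase_of_mem ha]
      rw [Finset.card_erase_of_mem ha] at h1'
      omega
    have hda : ¬ q ∣ a := fun h => by
      have := Nat.le_of_dvd (by omega) h; omega
    have hdb : ¬ q ∣ b := fun h => by
      have := Nat.le_of_dvd hb0 h; omega
    have hfa : a ∉ X.filter (fun x => q ∣ x) := fun h => hda (Finset.mem_filter.1 h).2
    have hfb : b ∉ X.filter (fun x => q ∣ x) := fun h => hdb (Finset.mem_filter.1 h).2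
    have hf : ((X.erase a).erase b).filter (fun x => q ∣ x) = X.filter (fun x => q ∣ x) := by
      rw [Finset.filter_erase, Finset.filter_erase,
        Finset.erase_eq_of_notMem (fun h => hfb (Finset.mem_of_mem_erase h)),
        Finset.erase_eq_of_notMem hfa]
    unfold barSign
    rw [← zpow_add, hs, hc, hf]
    apply neg_one_zpow_congr
    rw [Int.even_iff]
    omega

/-- For odd `q` and a bar partition `X` with `q̄`-core `Y` and
`q̄`-weight `w`, one has `σ(X) = σ(Y) · σ(quotient)` where
`σ(quotient) = (-1)^{w - ℓ(λ⁰)}` and `ℓ(λ⁰)` is the number of parts of `X` divisible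
by `q`. -/
theorem stmt_11 (q w : ℕ) (hq : Odd q) (X Y : Finset ℕ) (h0 : 0 ∉ X)
    (hseq : BarSeq q w X Y) (hcore : IsBarCore q Y) :
    barSign X =
      barSign Y * (-1 : ℤˣ) ^ ((w : ℤ) - ((X.filter (fun a => q ∣ a)).card : ℤ)) := by
  induction w generalizing X with
  | zero =>
    simp only [BarSeq] at hseq
    subst hseq
    rw [core_filter q hq _ h0 hcore]
    simp
  | succ w ih =>
    obtain ⟨Z, hrem, hseq'⟩ := hseq
    obtain ⟨hZ0, hsign⟩ := step q hq X Z h0 hrem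
    rw [hsign, ih Z hZ0 hseq', mul_assoc, ← zpow_add]
    congr 1
    push_cast
    ring
end

section
/- Let λ be a bar partition of n with σ(λ) = 1 (even number of even parts), and suppose μ ∈ M_q(λ) is obtained from λ by removing a bar b of odd length q. If b is a mixed or hook-type bar (so that ℓ(μ) = ℓ(λ) or ℓ(μ) = ℓ(λ)−2), then σ(μ) = −σ(λ); and σ(μ) = σ(λ) if and only if b is a whole part of λ of length q, i.e. μ = λ ∖ {q}. In particular, the set {μ ∈ M_q(λ) : σ(μ) = σ(λ)} is either empty or equals {λ ∖ {q}}. -/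
open scoped BigOperators

lemma neg_one_zpow_odd (d : ℤ) (hd : Odd d) : (-1 : ℤˣ) ^ d = -1 := by
  obtain ⟨m, hm⟩ := hd
  subst hm
  rw [zpow_add, zpow_one, zpow_mul, zpow_two]
  norm_num

lemma neg_one_zpow_sub_odd (e d : ℤ) (hd : Odd d) :
    (-1 : ℤˣ) ^ (e - d) = -(-1 : ℤˣ) ^ e := by
  rw [zpow_sub, neg_one_zpow_odd d hd]
  simp

lemma neg_one_zpow_sub_even (e d : ℤ) (hd : Even d) :
    (-1 : ℤˣ) ^ (e - d) = (-1 : ℤˣ) ^ e := by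
  rw [zpow_sub, hd.neg_one_zpow]
  simp

lemma sign_case1 (q a : ℕ) (hq : Odd q) (X : Finset ℕ) (ha : a ∈ X) (hlt : q < a)
    (hn : a - q ∉ X) : barSign (insert (a - q) (X.erase a)) = -barSign X := by
  have hn' : a - q ∉ X.erase a := fun h => hn (Finset.mem_of_mem_erase h)
  unfold barSign
  rw [Finset.sum_insert hn', Finset.card_insert_of_notMem hn',
    Finset.sum_erase_eq_sub (f := fun x : ℕ => (x : ℤ)) ha,
    ← Finset.card_erase_add_one ha]
  have hcast : ((a - q : ℕ) : ℤ) = (a : ℤ) - q := Nat.cast_sub hlt.le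
  rw [hcast]
  push_cast
  have h1 : (a : ℤ) - ↑q + ((∑ x ∈ X, (x : ℤ)) - ↑a) - (↑(X.erase a).card + 1) =
      ((∑ x ∈ X, (x : ℤ)) - (↑(X.erase a).card + 1)) - q := by ring
  rw [h1]
  refine neg_one_zpow_sub_odd _ _ ?_
  obtain ⟨m, hm⟩ := hq
  exact ⟨m, by omega⟩

lemma sign_case2 (q : ℕ) (hq : Odd q) (X : Finset ℕ) (hqX : q ∈ X) :
    barSign (X.erase q) = barSign X := by
  unfold barSign
  rw [Finset.sum_erase_eq_sub (f := fun x : ℕ => (x : ℤ)) hqX,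
    ← Finset.card_erase_add_one hqX]
  push_cast
  have h1 : (∑ x ∈ X, (x : ℤ)) - ↑q - ↑(X.erase q).card =
      ((∑ x ∈ X, (x : ℤ)) - (↑(X.erase q).card + 1)) - ((q : ℤ) - 1) := by ring
  rw [h1]
  refine neg_one_zpow_sub_even _ _ ?_
  obtain ⟨m, hm⟩ := hq
  exact ⟨m, by omega⟩

lemma sign_case3 (q a b : ℕ) (hq : Odd q) (X : Finset ℕ) (ha : a ∈ X) (hb : b ∈ X)
    (hba : b < a) (hab : a + b = q) :
    barSign ((X.erase a).erase b) = -barSign X := by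
  have hb' : b ∈ X.erase a := Finset.mem_erase.2 ⟨hba.ne, hb⟩
  unfold barSign
  rw [Finset.sum_erase_eq_sub (f := fun x : ℕ => (x : ℤ)) hb',
    Finset.sum_erase_eq_sub (f := fun x : ℕ => (x : ℤ)) ha,
    ← Finset.card_erase_add_one ha, ← Finset.card_erase_add_one hb']
  push_cast
  have h1 : (∑ x ∈ X, (x : ℤ)) - ↑a - ↑b - ↑((X.erase a).erase b).card =
      ((∑ x ∈ X, (x : ℤ)) - (↑((X.erase a).erase b).card + 1 + 1)) - ((q : ℤ) - 2) := by
    have : (a : ℤ) + b = q := by exact_mod_cast hab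
    linarith
  rw [h1]
  refine neg_one_zpow_sub_odd _ _ ?_
  obtain ⟨m, hm⟩ := hq
  exact ⟨(m : ℤ) - 1, by omega⟩

/-- Let `X` be a bar partition with `σ(X) = 1` and `q` odd.  If `Y` is
obtained from `X` by removing a `q`-bar of mixed or hook type (decreasing a part, or
removing two parts), then `σ(Y) = -σ(X)`; and for any removal of a `q`-bar,
`σ(Y) = σ(X)` iff the bar is a whole part of length `q`, i.e. `Y = X ∖ {q}`.  In
particular `{Y ∈ M_q(X) : σ(Y) = σ(X)}` is empty or equal to `{X ∖ {q}}`. -/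
theorem stmt_12 (q : ℕ) (hq : Odd q) (X : Finset ℕ) (h0 : 0 ∉ X)
    (hsign : barSign X = 1) :
    (∀ Y : Finset ℕ,
      ((∃ a ∈ X, q < a ∧ a - q ∉ X ∧ Y = insert (a - q) (X.erase a)) ∨
       (∃ a b, a ∈ X ∧ b ∈ X ∧ b < a ∧ a + b = q ∧ Y = (X.erase a).erase b)) →
      barSign Y = -barSign X) ∧
    (∀ Y : Finset ℕ, IsBarRemoval q X Y →
      (barSign Y = barSign X ↔ q ∈ X ∧ Y = X.erase q)) ∧
    (∀ Y : Finset ℕ, IsBarRemoval q X Y → barSign Y = barSign X → Y = X.erase q) := by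
  have key : ∀ Y : Finset ℕ,
      ((∃ a ∈ X, q < a ∧ a - q ∉ X ∧ Y = insert (a - q) (X.erase a)) ∨
       (∃ a b, a ∈ X ∧ b ∈ X ∧ b < a ∧ a + b = q ∧ Y = (X.erase a).erase b)) →
      barSign Y = -barSign X := by
    rintro Y (⟨a, ha, hlt, hn, rfl⟩ | ⟨a, b, ha, hb, hba, hab, rfl⟩)
    · exact sign_case1 q a hq X ha hlt hn
    · exact sign_case3 q a b hq X ha hb hba hab
  have hne : ∀ Y : Finset ℕ, barSign Y = -barSign X → barSign Y ≠ barSign X := by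
    intro Y h h'
    rw [h'] at h
    exact (by decide : ¬ ((1 : ℤˣ) = -1)) (by rw [hsign] at h; simpa using h)
  refine ⟨key, ?_, ?_⟩
  · intro Y hY
    constructor
    · intro hs
      rcases hY with h | h | h
      · exact absurd hs (hne Y (key Y (Or.inl h)))
      · exact h
      · exact absurd hs (hne Y (key Y (Or.inr h)))
    · rintro ⟨hqX, rfl⟩
      exact sign_case2 q hq X hqX
  · intro Y hY hs
    rcases hY with h | h | h
    · exact absurd hs (hne Y (key Y (Or.inl h)))
    · exact h.2
    · exact absurd hs (hne Y (key Y (Or.inr h)))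
end
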